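/- arXiv:2503.02990 — 4 statements merged into one kernel-verified Lean document; each statement's English description precedes it below -/
import Mathlib

section
/- The generating function of the flag major index on the colored permutation group satisfies: Σ_{(ω,τ)∈𝔖_{n,r}} q^{fmaj_{n,r}(ω,τ)} = [r]_q [2r]_q ⋯ [nr]_q, where [m]_q = 1 + q + ⋯ + q^{m-1}. -/
open scoped Classical BigOperators

namespace ColoredPerm

/-- A colored permutation: a pair of a permutation of `Fin n` and a coloring. -/
abbrev CP (n r : ℕ) := Equiv.Perm (Fin n) × (Fin n → ZMod r)

/-- Index `i : Fin n` represents position `i+1 ∈ [n]`.  Descent at position `i+1`. -/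
def IsDescent {n r : ℕ} (σ : CP n r) (i : Fin n) : Prop :=
  if h : (i : ℕ) + 1 < n then
    (σ.2 ⟨(i : ℕ) + 1, h⟩).val < (σ.2 i).val ∨
      (σ.2 i = σ.2 ⟨(i : ℕ) + 1, h⟩ ∧ σ.1 ⟨(i : ℕ) + 1, h⟩ < σ.1 i)
  else (σ.2 i).val ≠ 0

/-- Descent indicator. -/
noncomputable def X {n r : ℕ} (i : Fin n) (σ : CP n r) : ℚ :=
  if IsDescent σ i then 1 else 0

/-- Color indicator `Y_{i,c}`. -/
noncomputable def Y {n r : ℕ} (i : Fin n) (c : ZMod r) (σ : CP n r) : ℚ :=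
  if σ.2 i = c then 1 else 0

noncomputable def des {n r : ℕ} (σ : CP n r) : ℕ :=
  (Finset.univ.filter (fun i => IsDescent σ i)).card

/-- Major index: sum of descent positions lying in `[n-1]`. -/
noncomputable def maj {n r : ℕ} (σ : CP n r) : ℕ :=
  ∑ i ∈ Finset.univ.filter (fun i : Fin n => IsDescent σ i ∧ (i : ℕ) + 1 < n),
    ((i : ℕ) + 1)

def col {n r : ℕ} (σ : CP n r) : ℕ := ∑ i, (σ.2 i).val

noncomputable def fmaj {n r : ℕ} (σ : CP n r) : ℕ := r * maj σ + col σ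

/-- Ordinary descent of a permutation of `Fin n` at position `i+1` (no descent at last position). -/
def IsDescentS {n : ℕ} (w : Equiv.Perm (Fin n)) (i : Fin n) : Prop :=
  if h : (i : ℕ) + 1 < n then w ⟨(i : ℕ) + 1, h⟩ < w i else False

noncomputable def XS {n : ℕ} (i : Fin n) (w : Equiv.Perm (Fin n)) : ℚ :=
  if IsDescentS w i then 1 else 0

noncomputable def majS {n : ℕ} (w : Equiv.Perm (Fin n)) : ℕ :=
  ∑ i ∈ Finset.univ.filter (fun i : Fin n => IsDescentS w i ∧ (i : ℕ) + 1 < n),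
    ((i : ℕ) + 1)

/-- Expectation of `f` under the uniform distribution on a finite set `S`. -/
noncomputable def E {α : Type*} (S : Finset α) (f : α → ℚ) : ℚ :=
  (∑ x ∈ S, f x) / S.card

/-- Group multiplication of the wreath product `ℤ_r ≀ 𝔖_n`. -/
def cmul {n r : ℕ} (x y : CP n r) : CP n r :=
  (x.1 * y.1, fun i => x.2 (y.1 i) + y.2 i)

/-- Inverse in the wreath product. -/
def cinv {n r : ℕ} (x : CP n r) : CP n r :=
  (x.1⁻¹, fun i => - x.2 (x.1⁻¹ i))

/-- Conjugacy in the colored permutation group. -/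
def IsConjCP {n r : ℕ} (x y : CP n r) : Prop :=
  ∃ g : CP n r, cmul (cmul g x) (cinv g) = y

/-- The elements in the same cycle of `σ` as `i`. -/
noncomputable def cycleSet {n r : ℕ} (σ : CP n r) (i : Fin n) : Finset (Fin n) :=
  Finset.univ.filter (fun x => σ.1.SameCycle i x)

/-- The number of cycles of `σ` of length `ℓ` whose colors sum to `j`. -/
noncomputable def cycleCount {n r : ℕ} (σ : CP n r) (ℓ : ℕ) (j : ZMod r) : ℕ :=
  (Finset.univ.filter (fun i : Fin n =>
      (cycleSet σ i).card = ℓ ∧ (∑ x ∈ cycleSet σ i, σ.2 x) = j)).card / ℓ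

/-- `σ` has no cycle of length `ℓ`. -/
def NoCycleOfLength {n r : ℕ} (σ : CP n r) (ℓ : ℕ) : Prop :=
  ∀ i : Fin n, (cycleSet σ i).card ≠ ℓ

/-- `C` is a conjugacy class of `𝔖_{n,r}`. -/
def IsConjClass {n r : ℕ} [NeZero r] (C : Finset (CP n r)) : Prop :=
  ∃ σ₀ : CP n r, C = Finset.univ.filter (fun σ => IsConjCP σ₀ σ)

/-- `C` has no cycles of lengths `1, 2, …, m`. -/
def NoShortCycles {n r : ℕ} (C : Finset (CP n r)) (m : ℕ) : Prop :=
  ∀ σ ∈ C, ∀ ℓ, 1 ≤ ℓ → ℓ ≤ m → NoCycleOfLength σ ℓ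

/-- The relation identifying `a_i` with `a_i + 1` (on indices: `a i` with the index of
value `(a i) + 1`, when it exists). -/
def adjRel {n k : ℕ} (a : Fin k → Fin n) (p q : Fin n) : Prop :=
  (∃ i, a i = p) ∧ (q : ℕ) = (p : ℕ) + 1

/-- Being in the same block induced by `a`. -/
def SameBlock {n k : ℕ} (a : Fin k → Fin n) (p q : Fin n) : Prop :=
  Relation.EqvGen (adjRel a) p q

/-- The block containing `p`. -/
noncomputable def blockOf {n k : ℕ} (a : Fin k → Fin n) (p : Fin n) : Finset (Fin n) :=
  Finset.univ.filter (fun q => SameBlock a p q)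

/-- The set of blocks induced by `a`. -/
noncomputable def blocks {n k : ℕ} (a : Fin k → Fin n) : Finset (Finset (Fin n)) :=
  Finset.univ.image (blockOf a)

/-- `∏_i 1/|𝓑_i|!` over the blocks induced by `a`. -/
noncomputable def blockProd {n k : ℕ} (a : Fin k → Fin n) : ℚ :=
  ∏ b ∈ blocks a, (1 : ℚ) / (Nat.factorial b.card)

end ColoredPerm

namespace ColoredPerm

noncomputable def ER {α : Type*} (S : Finset α) (f : α → ℝ) : ℝ :=
  (∑ x ∈ S, f x) / S.card

noncomputable def XR {n r : ℕ} (i : Fin n) (σ : CP n r) : ℝ :=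
  if IsDescent σ i then 1 else 0

noncomputable def XSR {n : ℕ} (i : Fin n) (w : Equiv.Perm (Fin n)) : ℝ :=
  if IsDescentS w i then 1 else 0

end ColoredPerm

namespace FMajAux

open Finset Equiv ColoredPerm

/-- Descent at natural-number position `m` (pair `(m, m+1)`, 0-indexed). -/
def descN {n : ℕ} (w : Equiv.Perm (Fin n)) (m : ℕ) : Prop :=
  ∃ h : m + 1 < n, w ⟨m + 1, h⟩ < w ⟨m, Nat.lt_of_succ_lt h⟩

lemma descN_lt {n : ℕ} {w : Equiv.Perm (Fin n)} {m : ℕ} (h : descN w m) : m + 1 < n := h.1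

lemma not_descN_of_ge {n : ℕ} (w : Equiv.Perm (Fin n)) {m : ℕ} (h : ¬ m + 1 < n) :
    ¬ descN w m := fun hd => h hd.1

lemma descN_iff {n : ℕ} (u : Equiv.Perm (Fin n)) (m : ℕ) (h : m + 1 < n) :
    descN u m ↔ u ⟨m + 1, h⟩ < u ⟨m, Nat.lt_of_succ_lt h⟩ :=
  ⟨fun ⟨_, h'⟩ => h', fun h' => ⟨h, h'⟩⟩

lemma majS_eq {n : ℕ} (w : Equiv.Perm (Fin n)) :
    majS w = ∑ m ∈ range n, if descN w m then m + 1 else 0 := by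
  rw [majS, Finset.sum_filter]
  rw [← Fin.sum_univ_eq_sum_range (fun m => if descN w m then m + 1 else 0) n]
  refine Finset.sum_congr rfl fun i _ => ?_
  congr 1
  unfold IsDescentS descN
  by_cases h : (i : ℕ) + 1 < n
  · simp only [dif_pos h, eq_iff_iff]
    constructor
    · rintro ⟨hd, -⟩; exact ⟨h, by simpa using hd⟩
    · rintro ⟨h', hlt⟩; exact ⟨by simpa using hlt, h⟩
  · simp only [dif_neg h, eq_iff_iff]
    constructor
    · rintro ⟨hf, -⟩; exact absurd hf id
    · rintro ⟨h', -⟩; exact absurd h' h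

lemma majS_eq_succ {n : ℕ} (w : Equiv.Perm (Fin n)) :
    majS w = ∑ m ∈ range (n + 1), if descN w m then m + 1 else 0 := by
  rw [majS_eq, Finset.sum_range_succ, if_neg (not_descN_of_ge w (by omega)), add_zero]

/-- Insertion of the largest value at position `p`. -/
def ins {n : ℕ} (p : Fin (n + 1)) (w : Equiv.Perm (Fin n)) : Equiv.Perm (Fin (n + 1)) :=
  ((finSuccEquiv' p).trans (Equiv.optionCongr w)).trans (finSuccEquiv' (Fin.last n)).symm

lemma ins_apply_self {n : ℕ} (p : Fin (n + 1)) (w : Equiv.Perm (Fin n)) :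
    ins p w p = Fin.last n := by
  simp [ins]

lemma ins_apply_succAbove {n : ℕ} (p : Fin (n + 1)) (w : Equiv.Perm (Fin n)) (j : Fin n) :
    ins p w (p.succAbove j) = Fin.castSucc (w j) := by
  simp [ins, ← Fin.succAbove_last]

lemma ins_apply_lt {n : ℕ} (p : Fin (n + 1)) (w : Equiv.Perm (Fin n)) {m : ℕ}
    (h1 : m < n) (hm : m < (p : ℕ)) :
    ins p w ⟨m, Nat.lt_succ_of_lt h1⟩ = Fin.castSucc (w ⟨m, h1⟩) := by
  have e : (⟨m, Nat.lt_succ_of_lt h1⟩ : Fin (n + 1)) = p.succAbove ⟨m, h1⟩ := by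
    rw [Fin.succAbove_of_castSucc_lt]
    · rfl
    · simp [Fin.lt_def, hm]
  rw [e, ins_apply_succAbove]

lemma ins_apply_gt {n : ℕ} (p : Fin (n + 1)) (w : Equiv.Perm (Fin n)) {m : ℕ}
    (h1 : m ≤ n) (hm : (p : ℕ) < m) :
    ins p w ⟨m, Nat.lt_succ_of_le h1⟩ = Fin.castSucc (w ⟨m - 1, by omega⟩) := by
  have e : (⟨m, Nat.lt_succ_of_le h1⟩ : Fin (n + 1)) = p.succAbove ⟨m - 1, by omega⟩ := by
    rw [Fin.succAbove_of_le_castSucc]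
    · ext; simp [Fin.succ]; omega
    · simp only [Fin.le_def, Fin.coe_castSucc]; omega
  rw [e, ins_apply_succAbove]

lemma gpt_ins_term {n : ℕ} (p : Fin (n + 1)) (w : Equiv.Perm (Fin n)) (m : ℕ)
    (hm : m < n + 1) :
    (if descN (ins p w) m then m + 1 else 0)
      = (if m + 1 < (p : ℕ) ∧ descN w m then m + 1 else 0)
        + (if m = (p : ℕ) ∧ m < n then m + 1 else 0)
        + (if (p : ℕ) < m ∧ descN w (m - 1) then m + 1 else 0) := by
  have hp : (p : ℕ) ≤ n := Nat.lt_succ_iff.mp p.isLt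
  by_cases hmn : m < n
  · rcases Nat.lt_trichotomy (m + 1) (p : ℕ) with hlt | heq | hgt
    · -- m + 1 < p : plain descent of w
      have h1 : descN (ins p w) m ↔ descN w m := by
        rw [descN_iff _ m (by omega), descN_iff _ m (by omega)]
        rw [ins_apply_lt p w (by omega) (by omega), ins_apply_lt p w hmn (by omega)]
        exact Fin.castSucc_lt_castSucc_iff
      rw [if_congr h1 rfl rfl,
        if_neg (show ¬(m = (p : ℕ) ∧ m < n) by omega),
        if_neg (show ¬((p : ℕ) < m ∧ descN w (m - 1)) by rintro ⟨h, -⟩; omega)]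
      simp [hlt]
    · -- m + 1 = p : no descent
      have h1 : ¬ descN (ins p w) m := by
        rw [descN_iff _ m (by omega)]
        have e1 : (⟨m + 1, by omega⟩ : Fin (n + 1)) = p := by ext; simpa using heq
        rw [e1, ins_apply_self, ins_apply_lt p w hmn (by omega)]
        exact Fin.not_lt.mpr (Fin.le_last _)
      rw [if_neg h1,
        if_neg (show ¬(m + 1 < (p : ℕ) ∧ descN w m) by rintro ⟨h, -⟩; omega),
        if_neg (show ¬(m = (p : ℕ) ∧ m < n) by omega),
        if_neg (show ¬((p : ℕ) < m ∧ descN w (m - 1)) by rintro ⟨h, -⟩; omega)]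
    · rcases Nat.lt_or_ge (p : ℕ) m with hgt' | hge
      · -- p < m : descent of w at m - 1
        have h1 : descN (ins p w) m ↔ descN w (m - 1) := by
          rw [descN_iff _ m (by omega), descN_iff _ (m - 1) (by omega)]
          rw [ins_apply_gt p w (by omega) (by omega), ins_apply_gt p w (by omega) (by omega)]
          rw [Fin.castSucc_lt_castSucc_iff]
          have e1 : (⟨m + 1 - 1, by omega⟩ : Fin n) = ⟨m - 1 + 1, by omega⟩ := by
            ext; simp; omega
          rw [e1]
        rw [if_congr h1 rfl rfl,
          if_neg (show ¬(m + 1 < (p : ℕ) ∧ descN w m) by rintro ⟨h, -⟩; omega),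
          if_neg (show ¬(m = (p : ℕ) ∧ m < n) by omega)]
        simp [hgt']
      · -- m = p : always a descent
        have hmp : m = (p : ℕ) := by omega
        have h1 : descN (ins p w) m := by
          rw [descN_iff _ m (by omega)]
          have e1 : (⟨m, by omega⟩ : Fin (n + 1)) = p := by ext; simpa using hmp
          rw [e1, ins_apply_self, ins_apply_gt p w (by omega) (by omega)]
          exact Fin.castSucc_lt_last _
        rw [if_pos h1,
          if_neg (show ¬(m + 1 < (p : ℕ) ∧ descN w m) by rintro ⟨h, -⟩; omega),
          if_pos ⟨hmp, hmn⟩,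
          if_neg (show ¬((p : ℕ) < m ∧ descN w (m - 1)) by rintro ⟨h, -⟩; omega)]
        simp
  · -- m = n : everything vanishes
    have hm' : m = n := by omega
    rw [if_neg (not_descN_of_ge _ (by omega)),
      if_neg (show ¬(m + 1 < (p : ℕ) ∧ descN w m) by rintro ⟨h, -⟩; omega),
      if_neg (show ¬(m = (p : ℕ) ∧ m < n) by omega),
      if_neg (show ¬((p : ℕ) < m ∧ descN w (m - 1)) by
        rintro ⟨h1, h2⟩; have := descN_lt h2; omega)]

/-- Number of descents of `w` at positions `≥ P`. -/
noncomputable def cnt {n : ℕ} (w : Equiv.Perm (Fin n)) (P : ℕ) : ℕ :=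
  ((Finset.Ico P n).filter (descN w)).card

lemma majS_ins_add {n : ℕ} (p : Fin (n + 1)) (w : Equiv.Perm (Fin n)) :
    majS (ins p w) + (if 1 ≤ (p : ℕ) ∧ descN w ((p : ℕ) - 1) then (p : ℕ) else 0)
      = majS w + (if (p : ℕ) < n then (p : ℕ) + 1 else 0) + cnt w (p : ℕ) := by
  set P := (p : ℕ) with hPdef
  have hP : P ≤ n := Nat.lt_succ_iff.mp p.isLt
  have hu : majS (ins p w)
      = (∑ m ∈ range (n + 1), if m + 1 < P ∧ descN w m then m + 1 else 0)
        + (∑ m ∈ range (n + 1), if m = P ∧ m < n then m + 1 else 0)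
        + (∑ m ∈ range (n + 1), if P < m ∧ descN w (m - 1) then m + 1 else 0) := by
    rw [majS_eq (ins p w), ← Finset.sum_add_distrib, ← Finset.sum_add_distrib]
    exact Finset.sum_congr rfl fun m hm => gpt_ins_term p w m (mem_range.mp hm)
  have hS2 : (∑ m ∈ range (n + 1), if m = P ∧ m < n then m + 1 else 0)
      = (if P < n then P + 1 else 0) := by
    have e : ∀ m, (if m = P ∧ m < n then m + 1 else 0)
        = if m = P then (if P < n then P + 1 else 0) else 0 := by
      intro m
      by_cases h : m = P
      · simp [h]
      · simp [h]
    simp_rw [e]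
    rw [Finset.sum_ite_eq' (range (n + 1)) P, if_pos (mem_range.mpr (by omega))]
  have hB : ((range (n + 1)).filter (fun m => P ≤ m ∧ descN w m))
      = (Finset.Ico P n).filter (descN w) := by
    ext m
    simp only [Finset.mem_filter, Finset.mem_range, Finset.mem_Ico]
    constructor
    · rintro ⟨h1, h2, h3⟩; exact ⟨⟨h2, by have := descN_lt h3; omega⟩, h3⟩
    · rintro ⟨⟨h1, h2⟩, h3⟩; exact ⟨by omega, h1, h3⟩
  have hS3 : (∑ m ∈ range (n + 1), if P < m ∧ descN w (m - 1) then m + 1 else 0)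
      = (∑ m ∈ range (n + 1), if P ≤ m ∧ descN w m then m + 1 else 0) + cnt w P := by
    rw [← Finset.sum_filter, ← Finset.sum_filter]
    have key : ∑ m ∈ (range (n + 1)).filter (fun m => P < m ∧ descN w (m - 1)), (m + 1)
        = ∑ m ∈ (range (n + 1)).filter (fun m => P ≤ m ∧ descN w m), (m + 1 + 1) := by
      refine Finset.sum_nbij' (fun m => m - 1) (fun m => m + 1) ?_ ?_ ?_ ?_ ?_
      · intro a ha
        simp only [Finset.mem_filter, Finset.mem_range] at ha ⊢
        obtain ⟨h1, h2, h3⟩ := ha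
        refine ⟨by omega, by omega, by
          have : a - 1 + 1 = a := by omega
          exact h3⟩
      · intro a ha
        simp only [Finset.mem_filter, Finset.mem_range] at ha ⊢
        obtain ⟨h1, h2, h3⟩ := ha
        have := descN_lt h3
        refine ⟨by omega, by omega, by simpa using h3⟩
      · intro a ha
        simp only [Finset.mem_filter, Finset.mem_range] at ha
        omega
      · intro a ha; omega
      · intro a ha
        simp only [Finset.mem_filter, Finset.mem_range] at ha
        omega
    rw [key, hB]
    rw [Finset.sum_add_distrib, Finset.sum_const, smul_eq_mul, mul_one, cnt]
  have hw : majS w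
      = (∑ m ∈ range (n + 1), if m + 1 < P ∧ descN w m then m + 1 else 0)
        + (∑ m ∈ range (n + 1), if m + 1 = P ∧ descN w m then m + 1 else 0)
        + (∑ m ∈ range (n + 1), if P ≤ m ∧ descN w m then m + 1 else 0) := by
    rw [majS_eq_succ, ← Finset.sum_add_distrib, ← Finset.sum_add_distrib]
    refine Finset.sum_congr rfl fun m _ => ?_
    by_cases hd : descN w m
    · rcases Nat.lt_trichotomy (m + 1) P with h | h | h
      · rw [if_pos hd, if_pos ⟨h, hd⟩, if_neg (by omega), if_neg (by rintro ⟨h', -⟩; omega)]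
      · rw [if_pos hd, if_neg (by omega), if_pos ⟨h, hd⟩, if_neg (by rintro ⟨h', -⟩; omega)]
        omega
      · rw [if_pos hd, if_neg (by omega), if_neg (by omega), if_pos ⟨by omega, hd⟩]; omega
    · rw [if_neg hd, if_neg (by rintro ⟨-, h'⟩; exact hd h'),
        if_neg (by rintro ⟨-, h'⟩; exact hd h'), if_neg (by rintro ⟨-, h'⟩; exact hd h')]
  have hE : (∑ m ∈ range (n + 1), if m + 1 = P ∧ descN w m then m + 1 else 0)
      = (if 1 ≤ P ∧ descN w (P - 1) then P else 0) := by
    have e : ∀ m, (if m + 1 = P ∧ descN w m then m + 1 else 0)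
        = if m = P - 1 then (if 1 ≤ P ∧ descN w (P - 1) then P else 0) else 0 := by
      intro m
      by_cases h : m + 1 = P
      · have hm1 : m = P - 1 := by omega
        rw [if_pos hm1]
        by_cases hd : descN w m
        · rw [if_pos ⟨h, hd⟩, if_pos ⟨by omega, hm1 ▸ hd⟩]
          omega
        · rw [if_neg (by rintro ⟨-, h'⟩; exact hd h'),
            if_neg (by rintro ⟨-, h'⟩; exact hd (by rw [hm1]; exact h'))]
      · by_cases h2 : m = P - 1
        · have hP0 : P = 0 := by omega
          rw [if_neg (by rintro ⟨h', -⟩; omega), if_pos h2, if_neg (by rintro ⟨h', -⟩; omega)]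
        · rw [if_neg (by rintro ⟨h', -⟩; omega), if_neg h2]
    simp_rw [e]
    rw [Finset.sum_ite_eq' (range (n + 1)) (P - 1), if_pos (mem_range.mpr (by omega))]
  omega

noncomputable def delta {n : ℕ} (w : Equiv.Perm (Fin n)) (P : ℕ) : ℕ :=
  ((if P < n then P + 1 else 0) + cnt w P) - (if 1 ≤ P ∧ descN w (P - 1) then P else 0)

lemma cnt_le {n : ℕ} (w : Equiv.Perm (Fin n)) {P : ℕ} (h : P < n) :
    cnt w P + P + 1 ≤ n := by
  have h1 : ((Finset.Ico P n).filter (descN w)) ⊆ Finset.Ico P (n - 1) := by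
    intro m hm
    rw [Finset.mem_filter, Finset.mem_Ico] at hm
    have := descN_lt hm.2
    rw [Finset.mem_Ico]; omega
  have h2 := Finset.card_le_card h1
  rw [Nat.card_Ico] at h2
  unfold cnt; omega

lemma cnt_self {n : ℕ} (w : Equiv.Perm (Fin n)) : cnt w n = 0 := by
  unfold cnt; rw [Finset.Ico_self]; simp

lemma majS_ins {n : ℕ} (p : Fin (n + 1)) (w : Equiv.Perm (Fin n)) :
    majS (ins p w) = majS w + delta w (p : ℕ) := by
  have h := majS_ins_add p w
  have hP : (p : ℕ) ≤ n := Nat.lt_succ_iff.mp p.isLt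
  unfold delta
  by_cases hc : 1 ≤ (p : ℕ) ∧ descN w ((p : ℕ) - 1)
  · have hpn : (p : ℕ) < n := by have := descN_lt hc.2; omega
    rw [if_pos hc] at h ⊢
    rw [if_pos hpn] at h ⊢
    omega
  · rw [if_neg hc] at h ⊢
    omega

lemma cnt_split {n : ℕ} (w : Equiv.Perm (Fin n)) {P P' : ℕ} (h1 : P ≤ P') (h2 : P' ≤ n) :
    cnt w P = ((Finset.Ico P P').filter (descN w)).card + cnt w P' := by
  unfold cnt
  rw [← Finset.Ico_union_Ico_eq_Ico h1 h2, Finset.filter_union,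
    Finset.card_union_of_disjoint
      (Finset.disjoint_filter_filter (Finset.Ico_disjoint_Ico_consecutive P P' n))]

lemma delta_ne {n : ℕ} (w : Equiv.Perm (Fin n)) {P1 P2 : ℕ} (h12 : P1 < P2) (h2 : P2 ≤ n) :
    delta w P1 ≠ delta w P2 := by
  have hsplit := cnt_split w (le_of_lt h12) h2
  set M := ((Finset.Ico P1 P2).filter (descN w)).card with hM
  have hMle : M ≤ P2 - P1 := by
    have := Finset.card_filter_le (Finset.Ico P1 P2) (descN w)
    rw [Nat.card_Ico] at this; omega
  have hP1n : P1 < n := by omega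
  unfold delta
  rw [if_pos hP1n]
  by_cases hd : descN w (P2 - 1)
  · have hP2n : P2 < n := by have := descN_lt hd; omega
    have hMge : 1 ≤ M := by
      rw [hM]
      exact Finset.card_pos.mpr ⟨P2 - 1, Finset.mem_filter.mpr
        ⟨Finset.mem_Ico.mpr ⟨by omega, by omega⟩, hd⟩⟩
    rw [if_pos hP2n, if_pos (show 1 ≤ P2 ∧ descN w (P2 - 1) from ⟨by omega, hd⟩)]
    by_cases hc1 : 1 ≤ P1 ∧ descN w (P1 - 1)
    · rw [if_pos hc1]; omega
    · rw [if_neg hc1]; omega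
  · have hMle' : M ≤ P2 - 1 - P1 := by
      have hsub : (Finset.Ico P1 P2).filter (descN w) ⊆ Finset.Ico P1 (P2 - 1) := by
        intro m hm
        rw [Finset.mem_filter, Finset.mem_Ico] at hm
        rw [Finset.mem_Ico]
        obtain ⟨⟨ha, hb⟩, hdm⟩ := hm
        refine ⟨ha, ?_⟩
        rcases Nat.lt_or_ge m (P2 - 1) with h | h
        · exact h
        · exfalso
          have hmeq : m = P2 - 1 := by omega
          exact hd (hmeq ▸ hdm)
      have := Finset.card_le_card hsub
      rw [Nat.card_Ico] at this; omega
    rw [if_neg (show ¬(1 ≤ P2 ∧ descN w (P2 - 1)) by rintro ⟨-, h⟩; exact hd h)]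
    by_cases hP2n : P2 < n
    · rw [if_pos hP2n]
      by_cases hc1 : 1 ≤ P1 ∧ descN w (P1 - 1)
      · rw [if_pos hc1]; omega
      · rw [if_neg hc1]; omega
    · have hP2e : P2 = n := by omega
      rw [if_neg hP2n]
      have hcnt2 : cnt w P2 = 0 := by rw [hP2e]; exact cnt_self w
      by_cases hc1 : 1 ≤ P1 ∧ descN w (P1 - 1)
      · rw [if_pos hc1]; omega
      · rw [if_neg hc1]; omega

lemma delta_le {n : ℕ} (w : Equiv.Perm (Fin n)) {P : ℕ} (h : P ≤ n) : delta w P ≤ n := by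
  unfold delta
  by_cases hPn : P < n
  · have := cnt_le w hPn
    rw [if_pos hPn]; omega
  · have hP : P = n := by omega
    subst hP
    rw [if_neg hPn, cnt_self]; omega

lemma sum_pow_delta {n : ℕ} (w : Equiv.Perm (Fin n)) {R : Type*} [CommSemiring R] (q : R) :
    ∑ P ∈ Finset.range (n + 1), q ^ delta w P = ∑ j ∈ Finset.range (n + 1), q ^ j := by
  have hinj : ∀ x ∈ Finset.range (n + 1), ∀ y ∈ Finset.range (n + 1),
      delta w x = delta w y → x = y := by
    intro x hx y hy hxy
    rw [Finset.mem_range] at hx hy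
    rcases Nat.lt_trichotomy x y with h | h | h
    · exact absurd hxy (delta_ne w h (by omega))
    · exact h
    · exact absurd hxy.symm (delta_ne w h (by omega))
  have himage : (Finset.range (n + 1)).image (delta w) = Finset.range (n + 1) := by
    apply Finset.eq_of_subset_of_card_le
    · intro b hb
      rw [Finset.mem_image] at hb
      obtain ⟨a, ha, rfl⟩ := hb
      rw [Finset.mem_range] at ha
      rw [Finset.mem_range]
      exact Nat.lt_succ_of_le (delta_le w (by omega))
    · rw [Finset.card_image_of_injOn hinj]
  calc ∑ P ∈ Finset.range (n + 1), q ^ delta w P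
      = ∑ j ∈ (Finset.range (n + 1)).image (delta w), q ^ j := (Finset.sum_image hinj).symm
    _ = ∑ j ∈ Finset.range (n + 1), q ^ j := by rw [himage]

lemma ins_bijective {n : ℕ} :
    Function.Bijective (fun pw : Fin (n + 1) × Equiv.Perm (Fin n) => ins pw.1 pw.2) := by
  rw [Fintype.bijective_iff_injective_and_card]
  constructor
  · rintro ⟨p, w⟩ ⟨p', w'⟩ h
    simp only at h
    have hp : p = p' := by
      have h1 : ins p w p = Fin.last n := ins_apply_self p w
      have h2 : ins p' w' p' = Fin.last n := ins_apply_self p' w'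
      rw [h] at h1
      exact Equiv.injective _ (h1.trans h2.symm)
    subst hp
    have hw : ∀ j, w j = w' j := by
      intro j
      have hj : ins p w (p.succAbove j) = ins p w' (p.succAbove j) := by rw [h]
      rw [ins_apply_succAbove, ins_apply_succAbove] at hj
      exact Fin.castSucc_injective n hj
    have : w = w' := Equiv.ext hw
    rw [this]
  · simp [Fintype.card_perm, Nat.factorial_succ]

theorem majS_gen (n : ℕ) {R : Type*} [CommSemiring R] (q : R) :
    ∑ w : Equiv.Perm (Fin n), q ^ majS w
      = ∏ i ∈ Finset.range n, ∑ j ∈ Finset.range (i + 1), q ^ j := by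
  induction n with
  | zero =>
    have h0 : ∀ w : Equiv.Perm (Fin 0), majS w = 0 := fun w => by
      rw [majS]
      apply Finset.sum_eq_zero
      intro i _
      exact absurd i.isLt (by omega)
    simp [h0]
  | succ n ih =>
    have hbij := Fintype.sum_bijective _ (ins_bijective (n := n))
      (fun pw : Fin (n + 1) × Equiv.Perm (Fin n) => q ^ majS (ins pw.1 pw.2))
      (fun u => q ^ majS u) (fun pw => rfl)
    rw [← hbij, Fintype.sum_prod_type, Finset.sum_comm]
    have hinner : ∀ w : Equiv.Perm (Fin n),
        ∑ p : Fin (n + 1), q ^ majS (ins p w)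
          = q ^ majS w * ∑ j ∈ Finset.range (n + 1), q ^ j := by
      intro w
      have e : ∀ p : Fin (n + 1), q ^ majS (ins p w) = q ^ majS w * q ^ delta w (p : ℕ) := by
        intro p; rw [majS_ins, pow_add]
      rw [Fintype.sum_congr _ _ e, ← Finset.mul_sum]
      congr 1
      rw [Fin.sum_univ_eq_sum_range (fun P => q ^ delta w P) (n + 1)]
      exact sum_pow_delta w q
    simp_rw [hinner]
    rw [← Finset.sum_mul, ih, Finset.prod_range_succ]


section Reduction

variable {n r : ℕ}

lemma lex_lt {N a b u v : ℕ} (hu : u < N) (hv : v < N) :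
    a * N + u < b * N + v ↔ (a < b ∨ (a = b ∧ u < v)) := by
  constructor
  · intro h
    rcases Nat.lt_trichotomy a b with h' | h' | h'
    · exact Or.inl h'
    · subst h'
      exact Or.inr ⟨rfl, by omega⟩
    · exfalso
      have hcon : b * N + v < a * N + u := by
        calc b * N + v < b * N + N := by omega
          _ = (b + 1) * N := by ring
          _ ≤ a * N := Nat.mul_le_mul_right N h'
          _ ≤ a * N + u := Nat.le_add_right _ _
      omega
  · rintro (h | ⟨rfl, h⟩)
    · calc a * N + u < a * N + N := by omega
        _ = (a + 1) * N := by ring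
        _ ≤ b * N := Nat.mul_le_mul_right N h
        _ ≤ b * N + v := Nat.le_add_right _ _
    · omega

/-- Key used to sort colored values: colors first, then values. -/
def fkey [NeZero r] (γ : Fin n → ZMod r) (v : Fin n) : ℕ := (γ v).val * n + (v : ℕ)

lemma fkey_lt_iff [NeZero r] (γ : Fin n → ZMod r) (u v : Fin n) :
    fkey γ u < fkey γ v ↔
      ((γ u).val < (γ v).val ∨ ((γ u).val = (γ v).val ∧ (u : ℕ) < (v : ℕ))) :=
  lex_lt u.isLt v.isLt

lemma fkey_injective [NeZero r] (γ : Fin n → ZMod r) : Function.Injective (fkey γ) := by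
  intro u v h
  unfold fkey at h
  have h1 : ((u : ℕ) + (γ u).val * n) % n = ((v : ℕ) + (γ v).val * n) % n := by
    rw [Nat.add_comm ((u : ℕ)) _, Nat.add_comm ((v : ℕ)) _]
    rw [h]
  rw [Nat.add_mul_mod_self_right, Nat.add_mul_mod_self_right,
    Nat.mod_eq_of_lt u.isLt, Nat.mod_eq_of_lt v.isLt] at h1
  exact Fin.ext h1

/-- Rank (standardization) permutation for a coloring. -/
noncomputable def rk [NeZero r] (γ : Fin n → ZMod r) : Equiv.Perm (Fin n) :=
  (Tuple.sort (fkey γ))⁻¹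

lemma rk_lt_iff [NeZero r] (γ : Fin n → ZMod r) (u v : Fin n) :
    rk γ u < rk γ v ↔ fkey γ u < fkey γ v := by
  have hmono : StrictMono (fkey γ ∘ Tuple.sort (fkey γ)) :=
    (Tuple.monotone_sort (fkey γ)).strictMono_of_injective
      ((fkey_injective γ).comp (Equiv.injective _))
  have h := hmono.lt_iff_lt (a := rk γ u) (b := rk γ v)
  have e1 : (fkey γ ∘ Tuple.sort (fkey γ)) (rk γ u) = fkey γ u := by
    simp [rk, Function.comp]
  have e2 : (fkey γ ∘ Tuple.sort (fkey γ)) (rk γ v) = fkey γ v := by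
    simp [rk, Function.comp]
  rw [e1, e2] at h
  exact h.symm

lemma maj_eq_majS [NeZero r] (ω : Equiv.Perm (Fin n)) (γ : Fin n → ZMod r) :
    ColoredPerm.maj ((ω, fun i => γ (ω i)) : ColoredPerm.CP n r)
      = ColoredPerm.majS (rk γ * ω) := by
  unfold ColoredPerm.maj ColoredPerm.majS
  apply Finset.sum_congr _ (fun _ _ => rfl)
  apply Finset.filter_congr
  intro i _
  by_cases h : (i : ℕ) + 1 < n
  · simp only [h, and_true]
    unfold ColoredPerm.IsDescent ColoredPerm.IsDescentS
    rw [dif_pos h, dif_pos h]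
    dsimp only
    rw [Equiv.Perm.mul_apply, Equiv.Perm.mul_apply, rk_lt_iff, fkey_lt_iff]
    constructor
    · rintro (h1 | ⟨h1, h2⟩)
      · exact Or.inl h1
      · exact Or.inr ⟨by rw [h1], h2⟩
    · rintro (h1 | ⟨h1, h2⟩)
      · exact Or.inl h1
      · exact Or.inr ⟨(ZMod.val_injective r h1).symm, h2⟩
  · simp [h]

lemma col_eq [NeZero r] (ω : Equiv.Perm (Fin n)) (γ : Fin n → ZMod r) :
    ColoredPerm.col ((ω, fun i => γ (ω i)) : ColoredPerm.CP n r) = ∑ v, (γ v).val := by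
  unfold ColoredPerm.col
  exact Equiv.sum_comp ω (fun v => (γ v).val)

lemma zmod_sum_pow {R : Type*} [CommSemiring R] (q : R) (r : ℕ) [NeZero r] :
    ∑ c : ZMod r, q ^ c.val = ∑ b ∈ Finset.range r, q ^ b := by
  refine Finset.sum_nbij' (fun c => ZMod.val c) (fun b => (b : ZMod r)) ?_ ?_ ?_ ?_ ?_
  · intro c _
    exact Finset.mem_range.mpr (ZMod.val_lt c)
  · intro b _
    exact Finset.mem_univ _
  · intro c _
    exact ZMod.natCast_rightInverse c
  · intro b hb
    exact ZMod.val_cast_of_lt (Finset.mem_range.mp hb)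
  · intro c _
    rfl

lemma blocksum {R : Type*} [CommSemiring R] (q : R) (r m : ℕ) :
    ∑ j ∈ Finset.range (m * r), q ^ j
      = (∑ a ∈ Finset.range m, (q ^ r) ^ a) * (∑ b ∈ Finset.range r, q ^ b) := by
  induction m with
  | zero => simp
  | succ m ih =>
    have e : (m + 1) * r = m * r + r := by ring
    rw [e, Finset.sum_range_add, ih, Finset.sum_range_succ, add_mul]
    congr 1
    rw [Finset.mul_sum]
    refine Finset.sum_congr rfl fun x _ => ?_
    rw [pow_add, pow_mul']

end Reduction

end FMajAux

open ColoredPerm in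
theorem fmaj_generating_function (n r : ℕ) [NeZero r] :
    (∑ σ : CP n r, (PowerSeries.X : PowerSeries ℚ) ^ fmaj σ) =
    ∏ i ∈ Finset.range n, ∑ j ∈ Finset.range ((i + 1) * r),
      (PowerSeries.X : PowerSeries ℚ) ^ j := by
  classical
  set q : PowerSeries ℚ := PowerSeries.X with hq
  have h1 : ∀ ω : Equiv.Perm (Fin n),
      (∑ τ : Fin n → ZMod r, q ^ fmaj ((ω, τ) : CP n r))
        = ∑ γ : Fin n → ZMod r, q ^ fmaj ((ω, fun i => γ (ω i)) : CP n r) := by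
    intro ω
    refine (Fintype.sum_equiv
      (Equiv.arrowCongr (ω.symm : Fin n ≃ Fin n) (Equiv.refl (ZMod r)))
      (fun γ => q ^ fmaj ((ω, fun i => γ (ω i)) : CP n r))
      (fun τ => q ^ fmaj ((ω, τ) : CP n r)) ?_).symm
    intro γ
    have e : (Equiv.arrowCongr (ω.symm : Fin n ≃ Fin n) (Equiv.refl (ZMod r))) γ
        = fun i => γ (ω i) := by
      funext i
      simp [Equiv.arrowCongr]
    rw [e]
  have h2 : ∀ (ω : Equiv.Perm (Fin n)) (γ : Fin n → ZMod r),
      q ^ fmaj ((ω, fun i => γ (ω i)) : CP n r)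
        = (q ^ r) ^ majS (FMajAux.rk γ * ω) * ∏ v : Fin n, q ^ (γ v).val := by
    intro ω γ
    rw [ColoredPerm.fmaj, pow_add, FMajAux.maj_eq_majS ω γ, pow_mul, FMajAux.col_eq ω γ,
      ← Finset.prod_pow_eq_pow_sum]
  calc (∑ σ : CP n r, q ^ fmaj σ)
      = ∑ ω : Equiv.Perm (Fin n), ∑ τ : Fin n → ZMod r, q ^ fmaj ((ω, τ) : CP n r) :=
        Fintype.sum_prod_type _
    _ = ∑ ω : Equiv.Perm (Fin n), ∑ γ : Fin n → ZMod r,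
          (q ^ r) ^ majS (FMajAux.rk γ * ω) * ∏ v : Fin n, q ^ (γ v).val := by
        refine Finset.sum_congr rfl fun ω _ => ?_
        rw [h1 ω]
        exact Finset.sum_congr rfl fun γ _ => h2 ω γ
    _ = ∑ γ : Fin n → ZMod r, ∑ ω : Equiv.Perm (Fin n),
          (q ^ r) ^ majS (FMajAux.rk γ * ω) * ∏ v : Fin n, q ^ (γ v).val :=
        Finset.sum_comm
    _ = ∑ γ : Fin n → ZMod r, (∏ v : Fin n, q ^ (γ v).val)
          * ∑ w : Equiv.Perm (Fin n), (q ^ r) ^ majS w := by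
        refine Finset.sum_congr rfl fun γ _ => ?_
        rw [← Finset.sum_mul, mul_comm]
        congr 1
        exact Fintype.sum_equiv (Equiv.mulLeft (FMajAux.rk γ))
          (fun ω => (q ^ r) ^ majS (FMajAux.rk γ * ω))
          (fun w => (q ^ r) ^ majS w) (fun ω => by simp)
    _ = (∏ v : Fin n, ∑ c : ZMod r, q ^ c.val)
          * ∑ w : Equiv.Perm (Fin n), (q ^ r) ^ majS w := by
        rw [← Finset.sum_mul]
        congr 1
        exact (Fintype.prod_sum (fun (_ : Fin n) (c : ZMod r) => q ^ c.val)).symm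
    _ = (∑ b ∈ Finset.range r, q ^ b) ^ n
          * ∏ i ∈ Finset.range n, ∑ a ∈ Finset.range (i + 1), (q ^ r) ^ a := by
        rw [FMajAux.majS_gen n (q ^ r)]
        congr 1
        rw [Finset.prod_congr rfl (fun v _ => FMajAux.zmod_sum_pow q r)]
        rw [Finset.prod_const, Finset.card_univ, Fintype.card_fin]
    _ = ∏ i ∈ Finset.range n, ∑ j ∈ Finset.range ((i + 1) * r), q ^ j := by
        rw [Finset.prod_congr rfl (fun i _ => FMajAux.blocksum q r (i + 1))]
        rw [Finset.prod_mul_distrib, Finset.prod_const, Finset.card_range, mul_comm]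
end

section
/- Let a₁,…,a_k ∈ [n-1] and let 𝓑₁,…,𝓑_t be the blocks of [n] induced by a₁,…,a_k (the equivalence classes generated by identifying a_i with a_i + 1). Then the expected value over uniformly random (ω,τ) ∈ 𝔖_{n,r} of the product of descent indicators X_{a₁}⋯X_{a_k} equals ∏_{i=1}^t 1/|𝓑_i|!. -/
open scoped Classical BigOperators

namespace ColoredPerm

variable {n r k : ℕ}

section Basics

variable (a : Fin k → Fin n)

lemma sameBlock_refl (p : Fin n) : SameBlock a p p := Relation.EqvGen.refl p

lemma sameBlock_symm {p q : Fin n} (h : SameBlock a p q) : SameBlock a q p :=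
  Relation.EqvGen.symm _ _ h

lemma sameBlock_trans {p q s : Fin n} (h1 : SameBlock a p q) (h2 : SameBlock a q s) :
    SameBlock a p s := Relation.EqvGen.trans _ _ _ h1 h2

/-- The key of a position: encodes the pair (color, letter) lexically. -/
def key (σ : CP n r) (x : Fin n) : ℕ := (σ.2 x).val * n + (σ.1 x : ℕ)

lemma key_base_lt {c c' w w' : ℕ} (hw : w < n) (hw' : w' < n) :
    c' * n + w' < c * n + w ↔ c' < c ∨ (c' = c ∧ w' < w) := by
  rcases lt_trichotomy c' c with h1 | h1 | h1
  · have h2 : (c' + 1) * n ≤ c * n := Nat.mul_le_mul_right n h1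
    have h4 : (c' + 1) * n = c' * n + n := by ring
    constructor
    · intro _; exact Or.inl h1
    · intro _; omega
  · subst h1
    constructor
    · intro h; right; exact ⟨rfl, by omega⟩
    · rintro (h | ⟨_, h⟩) <;> omega
  · have h2 : (c + 1) * n ≤ c' * n := Nat.mul_le_mul_right n h1
    have h4 : (c + 1) * n = c * n + n := by ring
    constructor
    · intro h; omega
    · rintro (h | ⟨h, _⟩) <;> omega

lemma key_injective (σ : CP n r) : Function.Injective (key σ) := by
  intro x y h
  unfold key at h
  have hx := (σ.1 x).isLt
  have hy := (σ.1 y).isLt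
  have h1 : ¬ ((σ.2 y).val < (σ.2 x).val ∨ ((σ.2 y).val = (σ.2 x).val ∧ (σ.1 y : ℕ) < (σ.1 x : ℕ))) := by
    rw [← key_base_lt hx hy]; omega
  have h2 : ¬ ((σ.2 x).val < (σ.2 y).val ∨ ((σ.2 x).val = (σ.2 y).val ∧ (σ.1 x : ℕ) < (σ.1 y : ℕ))) := by
    rw [← key_base_lt hy hx]; omega
  push_neg at h1 h2
  have hw : (σ.1 x : ℕ) = (σ.1 y : ℕ) := by
    rcases h1 with ⟨hc1, hc2⟩; rcases h2 with ⟨hc3, hc4⟩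
    omega
  exact σ.1.injective (Fin.ext hw)

lemma key_lt_iff [NeZero r] (σ : CP n r) (x y : Fin n) :
    key σ y < key σ x ↔
      ((σ.2 y).val < (σ.2 x).val ∨ (σ.2 x = σ.2 y ∧ σ.1 y < σ.1 x)) := by
  unfold key
  rw [key_base_lt (σ.1 x).isLt (σ.1 y).isLt]
  constructor
  · rintro (h | ⟨h, h2⟩)
    · exact Or.inl h
    · exact Or.inr ⟨ZMod.val_injective r h.symm, h2⟩
  · rintro (h | ⟨h, h2⟩)
    · exact Or.inl h
    · exact Or.inr ⟨by rw [h], h2⟩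

/-- `GoodA σ`: keys strictly decrease along each block. -/
def GoodA (σ : CP n r) : Prop :=
  ∀ p q : Fin n, SameBlock a p q → p < q → key σ q < key σ p

lemma le_iff_of_not_cut {p : Fin n} (hp : ¬ ∃ i, a i = p) {x y : Fin n}
    (h : SameBlock a x y) : (x ≤ p ↔ y ≤ p) := by
  induction h with
  | rel u v huv =>
      obtain ⟨⟨i, hi⟩, hv⟩ := huv
      have hne : (u : ℕ) ≠ (p : ℕ) := fun h => hp ⟨i, by rw [hi]; exact Fin.ext h⟩
      rw [Fin.le_def, Fin.le_def]; omega
  | refl => exact Iff.rfl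
  | symm _ _ _ ih => exact ih.symm
  | trans _ _ _ _ _ ih1 ih2 => exact ih1.trans ih2

lemma exists_a_eq {p q : Fin n} (h : SameBlock a p q) (hlt : p < q) : ∃ i, a i = p := by
  by_contra hp
  exact absurd ((le_iff_of_not_cut a hp h).mp le_rfl) (not_le.mpr hlt)

lemma sameBlock_succ {p : Fin n} (h : ∃ i, a i = p) (hp : (p : ℕ) + 1 < n) :
    SameBlock a p ⟨(p : ℕ) + 1, hp⟩ :=
  Relation.EqvGen.rel _ _ ⟨h, rfl⟩

end Basics

end ColoredPerm
namespace ColoredPerm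

variable {n r k : ℕ}

section Chain

variable (a : Fin k → Fin n)

lemma isDescent_iff_key [NeZero r] (σ : CP n r) (i : Fin k) (hi : (a i : ℕ) + 1 < n) :
    IsDescent σ (a i) ↔ key σ ⟨(a i : ℕ) + 1, hi⟩ < key σ (a i) := by
  rw [IsDescent, dif_pos hi, key_lt_iff]

lemma goodA_aux (ha : ∀ i, (a i : ℕ) + 1 < n) {σ : CP n r}
    (hd : ∀ i : Fin k, key σ ⟨(a i : ℕ) + 1, ha i⟩ < key σ (a i)) :
    ∀ (d : ℕ) (p q : Fin n), (q : ℕ) - (p : ℕ) ≤ d → SameBlock a p q → p < q →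
      key σ q < key σ p := by
  intro d
  induction d with
  | zero =>
      intro p q hle hsb hlt
      rw [Fin.lt_def] at hlt; omega
  | succ d ih =>
      intro p q hle hsb hlt
      obtain ⟨i, hi⟩ := exists_a_eq a hsb hlt
      have hp1 : (p : ℕ) + 1 < n := by
        have h1 := ha i
        have h2 : (a i : ℕ) = (p : ℕ) := by rw [hi]
        have h3 := q.isLt
        rw [Fin.lt_def] at hlt
        omega
      set p' : Fin n := ⟨(p : ℕ) + 1, hp1⟩ with hp'
      have heq : (⟨(a i : ℕ) + 1, ha i⟩ : Fin n) = p' := Fin.ext (by rw [hp']; simp [hi])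
      have hkey : key σ p' < key σ p := by
        have h := hd i; rw [heq, hi] at h; exact h
      have hpp' : SameBlock a p p' := sameBlock_succ a ⟨i, hi⟩ hp1
      by_cases hq : p' = q
      · rw [← hq]; exact hkey
      · have hlt' : p' < q := by
          rw [Fin.lt_def] at hlt ⊢
          have : (p' : ℕ) ≠ (q : ℕ) := fun h => hq (Fin.ext h)
          simp only [hp'] at *
          omega
        have hsb' : SameBlock a p' q := sameBlock_trans a (sameBlock_symm a hpp') hsb
        exact lt_trans (ih p' q (by rw [Fin.lt_def] at hlt; simp only [hp']; omega) hsb' hlt') hkey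

lemma goodA_of_descents (ha : ∀ i, (a i : ℕ) + 1 < n) {σ : CP n r}
    (hd : ∀ i : Fin k, key σ ⟨(a i : ℕ) + 1, ha i⟩ < key σ (a i)) : GoodA a σ :=
  fun p q hsb hlt => goodA_aux a ha hd ((q : ℕ) - (p : ℕ)) p q le_rfl hsb hlt

lemma goodA_descent (ha : ∀ i, (a i : ℕ) + 1 < n) {σ : CP n r} (hg : GoodA a σ) (i : Fin k) :
    key σ ⟨(a i : ℕ) + 1, ha i⟩ < key σ (a i) := by
  refine hg _ _ (sameBlock_succ a ⟨i, rfl⟩ (ha i)) ?_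
  exact Nat.lt_succ_self _

end Chain

end ColoredPerm
namespace ColoredPerm

variable {n r k : ℕ}

section Act

variable (a : Fin k → Fin n)

/-- Right action of permutations on colored permutations by position. -/
def act (π : Equiv.Perm (Fin n)) (σ : CP n r) : CP n r :=
  (σ.1 * π, fun x => σ.2 (π x))

lemma key_act (π : Equiv.Perm (Fin n)) (σ : CP n r) (x : Fin n) :
    key (act π σ) x = key σ (π x) := rfl

lemma act_act (π π' : Equiv.Perm (Fin n)) (σ : CP n r) :
    act π' (act π σ) = act (π * π') σ := by
  unfold act
  exact Prod.ext (mul_assoc _ _ _) rfl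

lemma act_one (σ : CP n r) : act (1 : Equiv.Perm (Fin n)) σ = σ := by
  unfold act
  exact Prod.ext (mul_one _) rfl

/-- Membership in the subgroup of block-preserving permutations. -/
def InH (π : Equiv.Perm (Fin n)) : Prop := ∀ x, SameBlock a x (π x)

lemma inH_one : InH a (1 : Equiv.Perm (Fin n)) := fun x => sameBlock_refl a x

lemma inH_mul {π π' : Equiv.Perm (Fin n)} (h : InH a π) (h' : InH a π') :
    InH a (π * π') := fun x =>
  sameBlock_trans a (h' x) (h (π' x))

lemma inH_inv {π : Equiv.Perm (Fin n)} (h : InH a π) : InH a π⁻¹ := by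
  intro x
  have := h (π⁻¹ x)
  rw [show π (π⁻¹ x) = x from π.apply_symm_apply x] at this
  exact sameBlock_symm a this

end Act

section Sorting

variable (a : Fin k → Fin n)

/-- Pairs within a block where keys increase (obstructions to goodness). -/
noncomputable def badPairs (σ : CP n r) : Finset (Fin n × Fin n) :=
  Finset.univ.filter fun z => z.1 < z.2 ∧ SameBlock a z.1 z.2 ∧ key σ z.1 < key σ z.2

lemma goodA_of_badPairs_empty {σ : CP n r} (h : badPairs a σ = ∅) : GoodA a σ := by
  intro p q hsb hlt
  by_contra hk
  have hne : key σ q ≠ key σ p := fun he => (ne_of_lt hlt) (key_injective σ he).symm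
  have hk' : key σ p < key σ q := by omega
  have : (p, q) ∈ badPairs a σ := by
    rw [badPairs, Finset.mem_filter]
    exact ⟨Finset.mem_univ _, hlt, hsb, hk'⟩
  rw [h] at this
  exact absurd this (Finset.notMem_empty _)

lemma exists_adj_bad {σ : CP n r} :
    ∀ (d : ℕ) (p q : Fin n), (q : ℕ) - (p : ℕ) ≤ d → SameBlock a p q → p < q →
      key σ p < key σ q →
      ∃ (m : Fin n) (hm : (m : ℕ) + 1 < n), (∃ i, a i = m) ∧
        key σ m < key σ ⟨(m : ℕ) + 1, hm⟩ := by
  intro d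
  induction d with
  | zero =>
      intro p q hle hsb hlt
      rw [Fin.lt_def] at hlt; omega
  | succ d ih =>
      intro p q hle hsb hlt hk
      obtain ⟨i, hi⟩ := exists_a_eq a hsb hlt
      have hp1 : (p : ℕ) + 1 < n := by
        have h2 : (a i : ℕ) = (p : ℕ) := by rw [hi]
        have h3 := q.isLt
        rw [Fin.lt_def] at hlt
        omega
      set p' : Fin n := ⟨(p : ℕ) + 1, hp1⟩ with hp'
      by_cases hkp : key σ p < key σ p'
      · exact ⟨p, hp1, ⟨i, hi⟩, hkp⟩
      · have hne : key σ p' ≠ key σ p := fun he => by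
          have := key_injective σ he
          rw [this] at hp'
          have := congrArg Fin.val hp'
          simp at this
        have hkp' : key σ p' < key σ p := by omega
        have hpp' : SameBlock a p p' := sameBlock_succ a ⟨i, hi⟩ hp1
        have hne2 : p' ≠ q := fun he => by rw [he] at hkp'; omega
        have hlt' : p' < q := by
          rw [Fin.lt_def] at hlt ⊢
          have : (p' : ℕ) ≠ (q : ℕ) := fun h => hne2 (Fin.ext h)
          simp only [hp'] at *
          omega
        have hsb' : SameBlock a p' q := sameBlock_trans a (sameBlock_symm a hpp') hsb
        exact ih p' q (by rw [Fin.lt_def] at hlt; simp only [hp']; omega) hsb' hlt' (by omega)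

end Sorting

end ColoredPerm
namespace ColoredPerm

variable {n r k : ℕ}

section Swap

variable (a : Fin k → Fin n)

lemma badPairs_swap_lt {σ : CP n r} {m : Fin n} (hm : (m : ℕ) + 1 < n)
    (hia : ∃ i, a i = m) (hk : key σ m < key σ ⟨(m : ℕ) + 1, hm⟩) :
    (badPairs a (act (Equiv.swap m ⟨(m : ℕ) + 1, hm⟩) σ)).card < (badPairs a σ).card := by
  set m' : Fin n := ⟨(m : ℕ) + 1, hm⟩ with hm'def
  set s := Equiv.swap m m' with hsdef
  have hmm' : m ≠ m' := by
    intro h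
    have := congrArg Fin.val h
    simp [hm'def] at this
  have hm'val : ((m' : Fin n) : ℕ) = (m : ℕ) + 1 := rfl
  -- values of the swap
  have hv : ∀ x : Fin n, ((s x : Fin n) : ℕ) =
      if (x : ℕ) = (m : ℕ) then (m : ℕ) + 1
      else if (x : ℕ) = (m : ℕ) + 1 then (m : ℕ) else (x : ℕ) := by
    intro x
    rcases eq_or_ne x m with h | h
    · subst h; rw [Equiv.swap_apply_left]; simp [hm'val]
    · rcases eq_or_ne x m' with h2 | h2
      · subst h2
        rw [Equiv.swap_apply_right, hm'val]
        have h1 : ¬ ((m : ℕ) + 1 = (m : ℕ)) := by omega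
        simp [h1]
      · rw [Equiv.swap_apply_of_ne_of_ne h h2]
        have h1 : (x : ℕ) ≠ (m : ℕ) := fun hh => h (Fin.ext hh)
        have h2' : (x : ℕ) ≠ (m : ℕ) + 1 := fun hh => h2 (Fin.ext hh)
        simp [h1, h2']
  have hsb_swap : ∀ x : Fin n, SameBlock a x (s x) := by
    intro x
    rcases eq_or_ne x m with h | h
    · subst h; rw [Equiv.swap_apply_left]; exact sameBlock_succ a hia hm
    · rcases eq_or_ne x m' with h2 | h2
      · subst h2; rw [Equiv.swap_apply_right]
        exact sameBlock_symm a (sameBlock_succ a hia hm)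
      · rw [Equiv.swap_apply_of_ne_of_ne h h2]; exact sameBlock_refl a x
  have hmem : (m, m') ∈ badPairs a σ := by
    rw [badPairs, Finset.mem_filter]
    refine ⟨Finset.mem_univ _, ?_, sameBlock_succ a hia hm, hk⟩
    show m < m'
    rw [Fin.lt_def, hm'val]; omega
  have hcard : (badPairs a (act s σ)).card ≤ ((badPairs a σ).erase (m, m')).card := by
    apply Finset.card_le_card_of_injOn (fun z => (s z.1, s z.2))
    · intro z hz
      rw [badPairs, Finset.mem_coe, Finset.mem_filter] at hz
      obtain ⟨-, hlt, hsb, hkey⟩ := hz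
      rw [key_act, key_act] at hkey
      have hne_val : ¬ ((z.1 : ℕ) = (m : ℕ) ∧ (z.2 : ℕ) = (m : ℕ) + 1) := by
        rintro ⟨h1, h2⟩
        have hz1 : z.1 = m := Fin.ext h1
        have hz2 : z.2 = m' := Fin.ext h2
        rw [hz1, hz2, Equiv.swap_apply_left, Equiv.swap_apply_right] at hkey
        omega
      rw [Finset.mem_coe, Finset.mem_erase]
      constructor
      · intro hpair
        have h1 : s z.1 = m := congrArg Prod.fst hpair
        have h2 : s z.2 = m' := congrArg Prod.snd hpair
        have e1 := hv z.1
        have e2 := hv z.2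
        rw [h1] at e1
        rw [h2, hm'val] at e2
        rw [Fin.lt_def] at hlt
        split_ifs at e1 e2 <;> omega
      · rw [badPairs, Finset.mem_filter]
        refine ⟨Finset.mem_univ _, ?_, ?_, hkey⟩
        · have e1 := hv z.1
          have e2 := hv z.2
          rw [Fin.lt_def] at hlt ⊢
          rw [e1, e2]
          split_ifs <;> omega
        · exact sameBlock_trans a (sameBlock_symm a (hsb_swap z.1))
            (sameBlock_trans a hsb (hsb_swap z.2))
    · intro z1 _ z2 _ h
      have h1 : s z1.1 = s z2.1 := congrArg Prod.fst h
      have h2 : s z1.2 = s z2.2 := congrArg Prod.snd h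
      exact Prod.ext (s.injective h1) (s.injective h2)
  calc (badPairs a (act s σ)).card ≤ ((badPairs a σ).erase (m, m')).card := hcard
    _ < (badPairs a σ).card := Finset.card_erase_lt_of_mem hmem

lemma exists_sort_aux :
    ∀ (N : ℕ) (σ : CP n r), (badPairs a σ).card ≤ N →
      ∃ π : Equiv.Perm (Fin n), InH a π ∧ GoodA a (act π σ) := by
  intro N
  induction N with
  | zero =>
      intro σ h
      refine ⟨1, inH_one a, ?_⟩
      rw [act_one]
      exact goodA_of_badPairs_empty a (Finset.card_eq_zero.mp (Nat.le_zero.mp h))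
  | succ N ih =>
      intro σ h
      by_cases h0 : GoodA a σ
      · exact ⟨1, inH_one a, by rw [act_one]; exact h0⟩
      · have hbad : ∃ p q : Fin n, SameBlock a p q ∧ p < q ∧ key σ p < key σ q := by
          rw [GoodA] at h0
          push_neg at h0
          obtain ⟨p, q, hsb, hlt, hge⟩ := h0
          have hne : key σ q ≠ key σ p := fun he => (ne_of_lt hlt) (key_injective σ he).symm
          exact ⟨p, q, hsb, hlt, by omega⟩
        obtain ⟨p, q, hsb, hlt, hkey⟩ := hbad
        obtain ⟨m, hm, hia, hk⟩ :=
          exists_adj_bad a ((q : ℕ) - (p : ℕ)) p q le_rfl hsb hlt hkey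
        set s := Equiv.swap m (⟨(m : ℕ) + 1, hm⟩ : Fin n) with hsdef
        have hdec := badPairs_swap_lt a hm hia hk
        rw [← hsdef] at hdec
        obtain ⟨π', hπ', hg⟩ := ih (act s σ) (by omega)
        refine ⟨s * π', inH_mul a ?_ hπ', ?_⟩
        · intro x
          rcases eq_or_ne x m with hxm | hxm
          · subst hxm; rw [hsdef, Equiv.swap_apply_left]; exact sameBlock_succ a hia hm
          · rcases eq_or_ne x (⟨(m : ℕ) + 1, hm⟩ : Fin n) with hxm' | hxm'
            · subst hxm'; rw [hsdef, Equiv.swap_apply_right]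
              exact sameBlock_symm a (sameBlock_succ a hia hm)
            · rw [hsdef, Equiv.swap_apply_of_ne_of_ne hxm hxm']; exact sameBlock_refl a x
        · rw [← act_act]; exact hg

lemma exists_sort (σ : CP n r) :
    ∃ π : Equiv.Perm (Fin n), InH a π ∧ GoodA a (act π σ) :=
  exists_sort_aux a (badPairs a σ).card σ le_rfl

end Swap

end ColoredPerm
namespace ColoredPerm

variable {n r k : ℕ}

section Unique

variable (a : Fin k → Fin n)

lemma strictMonoOn_finset_id {B : Finset (Fin n)} {π : Equiv.Perm (Fin n)}
    (hmaps : ∀ x ∈ B, π x ∈ B)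
    (hmono : ∀ x ∈ B, ∀ y ∈ B, x < y → π x < π y) : ∀ x ∈ B, π x = x := by
  by_contra hc
  push_neg at hc
  obtain ⟨x0, hx0, hne0⟩ := hc
  have hSne : (B.filter (fun x => π x ≠ x)).Nonempty :=
    ⟨x0, Finset.mem_filter.mpr ⟨hx0, hne0⟩⟩
  set m := (B.filter (fun x => π x ≠ x)).min' hSne with hmdef
  have hmS := (B.filter (fun x => π x ≠ x)).min'_mem hSne
  rw [Finset.mem_filter] at hmS
  obtain ⟨hmB, hmne⟩ := hmS
  have hfix : ∀ y ∈ B, y < m → π y = y := by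
    intro y hy hym
    by_contra hy'
    exact absurd (Finset.min'_le _ y (Finset.mem_filter.mpr ⟨hy, hy'⟩)) (not_le.mpr hym)
  rcases lt_or_gt_of_ne hmne with hlt | hgt
  · exact hmne (π.injective (hfix (π m) (hmaps m hmB) hlt))
  · obtain ⟨z, hz, hzm⟩ := Finset.surj_on_of_inj_on_of_card_le
      (fun x (_ : x ∈ B) => π x) (fun x hx => hmaps x hx)
      (fun x y _ _ h => π.injective h) le_rfl m hmB
    have hzm' : π z = m := hzm.symm
    rcases lt_trichotomy z m with h1 | h1 | h1
    · have h2 : π z = z := hfix z hz h1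
      exact absurd (h2.symm.trans hzm') (ne_of_lt h1)
    · rw [h1] at hzm'
      exact hmne hzm'
    · have h2 := hmono m hmB z hz h1
      rw [hzm'] at h2
      exact absurd h2 (not_lt.mpr hgt.le)

lemma act_good_eq_one {ρ : Equiv.Perm (Fin n)} (hρ : InH a ρ) {δ : CP n r}
    (hδ : GoodA a δ) (hδ' : GoodA a (act ρ δ)) : ρ = 1 := by
  have hx : ∀ x : Fin n, ρ x = x := by
    intro x
    refine strictMonoOn_finset_id (B := blockOf a x) ?_ ?_ x ?_
    · intro y hy
      rw [blockOf, Finset.mem_filter] at hy ⊢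
      exact ⟨Finset.mem_univ _, sameBlock_trans a hy.2 (hρ y)⟩
    · intro y hy z hz hyz
      rw [blockOf, Finset.mem_filter] at hy hz
      have hsb : SameBlock a y z := sameBlock_trans a (sameBlock_symm a hy.2) hz.2
      have h1 : key δ (ρ z) < key δ (ρ y) := by
        have := hδ' y z hsb hyz
        rwa [key_act, key_act] at this
      have hsbρ : SameBlock a (ρ y) (ρ z) :=
        sameBlock_trans a (sameBlock_symm a (hρ y)) (sameBlock_trans a hsb (hρ z))
      rcases lt_trichotomy (ρ y) (ρ z) with h | h | h
      · exact h
      · rw [h] at h1; omega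
      · have := hδ (ρ z) (ρ y) (sameBlock_symm a hsbρ) h
        omega
    · rw [blockOf, Finset.mem_filter]
      exact ⟨Finset.mem_univ _, sameBlock_refl a x⟩
  exact Equiv.ext hx

lemma card_univ_eq_mul [NeZero r] :
    (Finset.univ : Finset (CP n r)).card =
      (Finset.univ.filter (fun π : Equiv.Perm (Fin n) => InH a π)).card *
        (Finset.univ.filter (fun σ : CP n r => GoodA a σ)).card := by
  rw [← Finset.card_product]
  refine Finset.card_nbij'
    (i := fun (σ : CP n r) =>
      ((((exists_sort a σ).choose)⁻¹ : Equiv.Perm (Fin n)), act (exists_sort a σ).choose σ))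
    (j := fun z => act z.1 z.2) ?_ ?_ ?_ ?_
  · intro σ hσ
    have hspec := (exists_sort a σ).choose_spec
    rw [Finset.mem_coe, Finset.mem_product, Finset.mem_filter, Finset.mem_filter]
    exact ⟨⟨Finset.mem_univ _, inH_inv a hspec.1⟩, ⟨Finset.mem_univ _, hspec.2⟩⟩
  · intro z hz; exact Finset.mem_univ _
  · intro σ hσ
    show act ((exists_sort a σ).choose)⁻¹ (act (exists_sort a σ).choose σ) = σ
    rw [act_act, mul_inv_cancel, act_one]
  · intro z hz
    rw [Finset.mem_coe, Finset.mem_product, Finset.mem_filter, Finset.mem_filter] at hz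
    obtain ⟨⟨-, hπ⟩, -, hδ⟩ := hz
    set σ := act z.1 z.2 with hσdef
    have hspec := (exists_sort a σ).choose_spec
    set c := (exists_sort a σ).choose with hcdef
    have hact : act c σ = act (z.1 * c) z.2 := by rw [hσdef, act_act]
    have hρ : InH a (z.1 * c) := inH_mul a hπ hspec.1
    have hone : z.1 * c = 1 := by
      apply act_good_eq_one a hρ hδ
      rw [← hact]
      exact hspec.2
    have hcinv : c⁻¹ = z.1 := (eq_inv_of_mul_eq_one_left hone).symm
    have h2 : act c σ = z.2 := by
      rw [hact, hone, act_one]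
    exact Prod.ext hcinv h2

end Unique

end ColoredPerm
namespace ColoredPerm

variable {n r k : ℕ}

section Blocks

variable (a : Fin k → Fin n)

lemma mem_blockOf {p q : Fin n} : q ∈ blockOf a p ↔ SameBlock a p q := by
  rw [blockOf, Finset.mem_filter]
  exact ⟨fun h => h.2, fun h => ⟨Finset.mem_univ _, h⟩⟩

lemma blockOf_mem_blocks (p : Fin n) : blockOf a p ∈ blocks a :=
  Finset.mem_image_of_mem _ (Finset.mem_univ p)

lemma self_mem_blockOf (p : Fin n) : p ∈ blockOf a p :=
  (mem_blockOf a).mpr (sameBlock_refl a p)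

lemma blockOf_eq_of_sameBlock {p q : Fin n} (h : SameBlock a p q) :
    blockOf a p = blockOf a q := by
  ext x
  rw [mem_blockOf, mem_blockOf]
  exact ⟨fun h2 => sameBlock_trans a (sameBlock_symm a h) h2,
    fun h2 => sameBlock_trans a h h2⟩

lemma blocks_disjoint {b c : Finset (Fin n)} (hb : b ∈ blocks a) (hc : c ∈ blocks a)
    (hne : b ≠ c) {x : Fin n} (hxb : x ∈ b) : x ∉ c := by
  intro hxc
  obtain ⟨p, -, hp⟩ := Finset.mem_image.mp hb
  obtain ⟨q, -, hq⟩ := Finset.mem_image.mp hc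
  rw [← hp] at hxb
  rw [← hq] at hxc
  apply hne
  rw [← hp, ← hq]
  exact (blockOf_eq_of_sameBlock a ((mem_blockOf a).mp hxb)).trans
    (blockOf_eq_of_sameBlock a ((mem_blockOf a).mp hxc)).symm

/-- The condition that `π` preserves each block in `S` and fixes everything outside. -/
def Cond (S : Finset (Finset (Fin n))) (π : Equiv.Perm (Fin n)) : Prop :=
  (∀ x : Fin n, ∀ b ∈ S, x ∈ b → π x ∈ b) ∧
    (∀ x : Fin n, (∀ b ∈ S, x ∉ b) → π x = x)

lemma maps_of_fixes {b : Finset (Fin n)} {π : Equiv.Perm (Fin n)}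
    (h : ∀ x ∉ b, π x = x) : ∀ x ∈ b, π x ∈ b := by
  intro x hx
  by_contra hπx
  have := h (π x) hπx
  rw [π.injective this] at hπx
  exact hπx hx

lemma card_fixes_outside (b : Finset (Fin n)) :
    (Finset.univ.filter (fun π : Equiv.Perm (Fin n) => ∀ x ∉ b, π x = x)).card =
      Nat.factorial b.card := by
  have h1 : (Finset.univ.filter (fun π : Equiv.Perm (Fin n) => ∀ x ∉ b, π x = x)).card =
      Fintype.card {f : Equiv.Perm (Fin n) // ∀ x, ¬ (x ∈ b) → f x = x} :=
    (Fintype.card_subtype _).symm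
  rw [h1, ← Fintype.card_congr (Equiv.Perm.subtypeEquivSubtypePerm (· ∈ b)),
    Fintype.card_perm, Fintype.card_coe]

lemma card_cond : ∀ S : Finset (Finset (Fin n)), S ⊆ blocks a →
    (Finset.univ.filter (Cond S)).card = ∏ b ∈ S, Nat.factorial b.card := by
  intro S
  induction S using Finset.induction_on with
  | empty =>
      intro _
      rw [Finset.prod_empty]
      have : Finset.univ.filter (Cond (∅ : Finset (Finset (Fin n)))) = {1} := by
        ext π
        rw [Finset.mem_filter, Finset.mem_singleton]
        constructor
        · rintro ⟨-, -, h2⟩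
          exact Equiv.ext fun x => h2 x (fun b hb => absurd hb (Finset.notMem_empty _))
        · rintro rfl
          exact ⟨Finset.mem_univ _, fun x b hb => absurd hb (Finset.notMem_empty _),
            fun x _ => rfl⟩
      rw [this, Finset.card_singleton]
  | @insert b S' hbS' ih =>
      intro hsub
      have hb_blocks : b ∈ blocks a := hsub (Finset.mem_insert_self _ _)
      have hS'_sub : S' ⊆ blocks a := fun c hc => hsub (Finset.mem_insert_of_mem hc)
      have hbc_ne : ∀ c ∈ S', b ≠ c := fun c hc he => hbS' (he ▸ hc)
      rw [Finset.prod_insert hbS', ← ih hS'_sub, ← card_fixes_outside b,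
        ← Finset.card_product]
      refine (Finset.card_bij (i := fun (z : _ × _) (_ : z ∈ _) => z.1 * z.2) ?_ ?_ ?_).symm
      · rintro ⟨π₁, π₂⟩ hz
        rw [Finset.mem_product, Finset.mem_filter, Finset.mem_filter] at hz
        obtain ⟨⟨-, h1⟩, -, h2⟩ := hz
        rw [Finset.mem_filter]
        refine ⟨Finset.mem_univ _, ?_, ?_⟩
        · intro x c hc hxc
          rcases Finset.mem_insert.mp hc with rfl | hc'
          · have hx2 : π₂ x = x := h2.2 x (fun c' hc' =>
              blocks_disjoint a hb_blocks (hS'_sub hc') (hbc_ne c' hc') hxc)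
            show π₁ (π₂ x) ∈ c
            rw [hx2]
            exact maps_of_fixes h1 x hxc
          · have hx2 : π₂ x ∈ c := h2.1 x c hc' hxc
            show π₁ (π₂ x) ∈ c
            rw [h1 (π₂ x) (blocks_disjoint a (hS'_sub hc') hb_blocks
              (hbc_ne c hc').symm hx2)]
            exact hx2
        · intro x hx
          have hxb : x ∉ b := hx b (Finset.mem_insert_self _ _)
          have hx2 : π₂ x = x := h2.2 x (fun c hc => hx c (Finset.mem_insert_of_mem hc))
          show π₁ (π₂ x) = x
          rw [hx2]
          exact h1 x hxb
      · rintro ⟨π₁, π₂⟩ hz ⟨ρ₁, ρ₂⟩ hw he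
        rw [Finset.mem_product, Finset.mem_filter, Finset.mem_filter] at hz hw
        obtain ⟨⟨-, h1⟩, -, h2⟩ := hz
        obtain ⟨⟨-, g1⟩, -, g2⟩ := hw
        have he' : π₁ * π₂ = ρ₁ * ρ₂ := he
        have h22 : π₂ = ρ₂ := by
          apply Equiv.ext
          intro x
          by_cases hxb : x ∈ b
          · rw [h2.2 x (fun c hc => blocks_disjoint a hb_blocks (hS'_sub hc)
              (hbc_ne c hc) hxb),
              g2.2 x (fun c hc => blocks_disjoint a hb_blocks (hS'_sub hc)
              (hbc_ne c hc) hxb)]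
          · by_cases hxc : ∃ c ∈ S', x ∈ c
            · obtain ⟨c, hc, hxc⟩ := hxc
              have hp2 : π₂ x ∈ c := h2.1 x c hc hxc
              have hr2 : ρ₂ x ∈ c := g2.1 x c hc hxc
              have e1 : (π₁ * π₂) x = π₂ x := by
                show π₁ (π₂ x) = π₂ x
                exact h1 (π₂ x) (blocks_disjoint a (hS'_sub hc) hb_blocks
                  (hbc_ne c hc).symm hp2)
              have e2 : (ρ₁ * ρ₂) x = ρ₂ x := by
                show ρ₁ (ρ₂ x) = ρ₂ x
                exact g1 (ρ₂ x) (blocks_disjoint a (hS'_sub hc) hb_blocks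
                  (hbc_ne c hc).symm hr2)
              rw [← e1, ← e2, he']
            · push_neg at hxc
              rw [h2.2 x hxc, g2.2 x hxc]
        have h11 : π₁ = ρ₁ := by
          rw [h22] at he'
          exact mul_right_cancel he'
        rw [Prod.ext_iff]
        exact ⟨h11, h22⟩
      · intro τ hτ
        rw [Finset.mem_filter] at hτ
        obtain ⟨-, hτ1, hτ2⟩ := hτ
        have hiff : ∀ x, x ∈ b ↔ τ x ∈ b := by
          intro x
          constructor
          · intro hx
            exact hτ1 x b (Finset.mem_insert_self _ _) hx
          · intro hx
            by_contra hxb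
            by_cases hxc : ∃ c ∈ S', x ∈ c
            · obtain ⟨c, hc, hxc⟩ := hxc
              have := hτ1 x c (Finset.mem_insert_of_mem hc) hxc
              exact blocks_disjoint a (hS'_sub hc) hb_blocks (hbc_ne c hc).symm this hx
            · push_neg at hxc
              have : τ x = x := hτ2 x (fun c hc => by
                rcases Finset.mem_insert.mp hc with rfl | hc'
                · exact hxb
                · exact hxc c hc')
              rw [this] at hx
              exact hxb hx
        have hiff' : ∀ x, x ∉ b ↔ τ x ∉ b := fun x => not_iff_not.mpr (hiff x)
        set π₁ := Equiv.Perm.ofSubtype (τ.subtypePerm (fun x => (hiff x).symm) : Equiv.Perm {x : Fin n // x ∈ b})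
          with hπ₁
        set π₂ := Equiv.Perm.ofSubtype
          (τ.subtypePerm (fun x => (hiff' x).symm) : Equiv.Perm {x : Fin n // x ∉ b}) with hπ₂
        have hπ₁_fix : ∀ x ∉ b, π₁ x = x := fun x hx =>
          Equiv.Perm.ofSubtype_apply_of_not_mem (p := fun y => y ∈ b) _ hx
        have hπ₁_mem : ∀ x (hx : x ∈ b), π₁ x = τ x := fun x hx => by
          rw [hπ₁, Equiv.Perm.ofSubtype_apply_of_mem (p := fun y => y ∈ b) _ hx]
          rfl
        have hπ₂_fix : ∀ x (hx : x ∈ b), π₂ x = x := fun x hx =>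
          Equiv.Perm.ofSubtype_apply_of_not_mem (p := fun y => y ∉ b) _ (not_not_intro hx)
        have hπ₂_mem : ∀ x (hx : x ∉ b), π₂ x = τ x := fun x hx => by
          rw [hπ₂, Equiv.Perm.ofSubtype_apply_of_mem (p := fun y => y ∉ b) _ hx]
          rfl
        refine ⟨(π₁, π₂), ?_, ?_⟩
        · rw [Finset.mem_product, Finset.mem_filter, Finset.mem_filter]
          refine ⟨⟨Finset.mem_univ _, hπ₁_fix⟩, Finset.mem_univ _, ?_, ?_⟩
          · intro x c hc hxc
            have hxb : x ∉ b := blocks_disjoint a (hS'_sub hc) hb_blocks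
              (hbc_ne c hc).symm hxc
            rw [hπ₂_mem x hxb]
            exact hτ1 x c (Finset.mem_insert_of_mem hc) hxc
          · intro x hx
            by_cases hxb : x ∈ b
            · exact hπ₂_fix x hxb
            · rw [hπ₂_mem x hxb]
              exact hτ2 x (fun c hc => by
                rcases Finset.mem_insert.mp hc with rfl | hc'
                · exact hxb
                · exact hx c hc')
        · apply Equiv.ext
          intro x
          show π₁ (π₂ x) = τ x
          by_cases hxb : x ∈ b
          · rw [hπ₂_fix x hxb, hπ₁_mem x hxb]
          · rw [hπ₂_mem x hxb, hπ₁_fix (τ x) ((hiff' x).mp hxb)]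

lemma card_inH :
    (Finset.univ.filter (fun π : Equiv.Perm (Fin n) => InH a π)).card =
      ∏ b ∈ blocks a, Nat.factorial b.card := by
  rw [← card_cond a (blocks a) (le_refl _)]
  congr 1
  apply Finset.filter_congr
  intro π _
  constructor
  · intro h
    constructor
    · intro x b hb hxb
      obtain ⟨p, -, hp⟩ := Finset.mem_image.mp hb
      rw [← hp] at hxb ⊢
      exact (mem_blockOf a).mpr (sameBlock_trans a ((mem_blockOf a).mp hxb) (h x))
    · intro x hx
      exact absurd (self_mem_blockOf a x) (hx _ (blockOf_mem_blocks a x))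
  · intro h x
    exact (mem_blockOf a).mp (h.1 x (blockOf a x) (blockOf_mem_blocks a x)
      (self_mem_blockOf a x))

end Blocks

end ColoredPerm
open ColoredPerm in
theorem expectation_descent_product (n r k : ℕ) [NeZero r] (a : Fin k → Fin n)
    (ha : ∀ i, (a i : ℕ) + 1 < n) :
    E Finset.univ (fun σ : CP n r => ∏ i, X (a i) σ) = blockProd a := by
  classical
  have hX : ∀ σ : CP n r, (∏ i, X (a i) σ) = if GoodA a σ then (1 : ℚ) else 0 := by
    intro σ
    by_cases h : GoodA a σ
    · rw [if_pos h]
      apply Finset.prod_eq_one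
      intro i _
      rw [X, if_pos]
      exact (isDescent_iff_key a σ i (ha i)).mpr (goodA_descent a ha h i)
    · rw [if_neg h]
      have h2 : ¬ ∀ i, IsDescent σ (a i) := fun hd =>
        h (goodA_of_descents a ha (fun i => (isDescent_iff_key a σ i (ha i)).mp (hd i)))
      push_neg at h2
      obtain ⟨i, hi⟩ := h2
      exact Finset.prod_eq_zero (Finset.mem_univ i) (by rw [X, if_neg hi])
  have hsum : (∑ σ : CP n r, ∏ i, X (a i) σ) =
      ((Finset.univ.filter (fun σ : CP n r => GoodA a σ)).card : ℚ) := by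
    rw [Finset.sum_congr rfl (fun σ _ => hX σ)]
    simp [Finset.sum_boole]
  rw [E, hsum]
  set G := (Finset.univ.filter (fun σ : CP n r => GoodA a σ)).card with hG
  set Hc := (Finset.univ.filter (fun π : Equiv.Perm (Fin n) => InH a π)).card with hHc
  have hU : (Finset.univ : Finset (CP n r)).card = Hc * G := card_univ_eq_mul a
  have hU0 : (Finset.univ : Finset (CP n r)).card ≠ 0 :=
    Finset.card_ne_zero_of_mem (Finset.mem_univ ((1, fun _ => 0) : CP n r))
  have hG0 : G ≠ 0 := by
    intro h
    rw [h, Nat.mul_zero] at hU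
    exact hU0 hU
  have hHc0 : Hc ≠ 0 := by
    intro h
    rw [h, Nat.zero_mul] at hU
    exact hU0 hU
  have hbp : blockProd a = ((Hc : ℚ))⁻¹ := by
    rw [blockProd]
    simp only [one_div]
    rw [Finset.prod_inv_distrib, ← Nat.cast_prod, ← card_inH a]
  rw [hbp, hU]
  have hG0' : (G : ℚ) ≠ 0 := Nat.cast_ne_zero.mpr hG0
  have hHc0' : (Hc : ℚ) ≠ 0 := Nat.cast_ne_zero.mpr hHc0
  push_cast
  field_simp
end

section
/- For any 1 ≤ m < n, the probability that a uniformly random (ω,τ) ∈ 𝔖_{n,r} has descents at all positions m+1, m+2, …, n equals ((r-1)/r)^{n-m} · 1/(n-m)!. -/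
open scoped Classical BigOperators

namespace CPA
open Finset ColoredPerm

variable {n r m : ℕ}

/-- strict antitonicity from adjacent steps on `Fin L` -/
lemma step_strictAnti {L : ℕ} {β : Type*} [Preorder β] {f : Fin L → β}
    (h : ∀ (j : ℕ) (hj : j + 1 < L), f ⟨j + 1, hj⟩ < f ⟨j, Nat.lt_of_succ_lt hj⟩) :
    StrictAnti f := by
  have key : ∀ d (a : ℕ) (ha : a + d + 1 < L), f ⟨a + d + 1, ha⟩ < f ⟨a, by omega⟩ := by
    intro d
    induction d with
    | zero => intro a ha; exact h a ha
    | succ d ih =>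
        intro a ha
        have h1 : f ⟨a + (d + 1) + 1, ha⟩ < f ⟨a + d + 1, by omega⟩ := by
          have := h (a + d + 1) (by omega)
          convert this using 3 <;> omega
        exact lt_trans h1 (ih a (by omega))
  intro a b hab
  have hk := key ((b : ℕ) - a - 1) (a : ℕ) (by omega)
  convert hk using 2 <;> (apply Fin.ext; simp only [] ; omega)

def Sset (u : Fin m ↪ Fin n) : Finset (Fin n) := univ \ image u univ

lemma card_Sset (hmn : m ≤ n) (u : Fin m ↪ Fin n) : (Sset u).card = n - m := by
  rw [Sset, card_sdiff_of_subset (subset_univ _), card_image_of_injective _ u.injective]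
  simp

noncomputable def emb (hmn : m ≤ n) (u : Fin m ↪ Fin n) : Fin (n - m) ↪o Fin n :=
  (Sset u).orderEmbOfFin (card_Sset hmn u)

lemma emb_mem (hmn : m ≤ n) (u : Fin m ↪ Fin n) (k : Fin (n - m)) :
    emb hmn u k ∈ Sset u := Finset.orderEmbOfFin_mem _ _ _

noncomputable def pset (hmn : m ≤ n) (u : Fin m ↪ Fin n) (g : Fin (n - m) → Fin (r - 1)) :
    Finset (Lex (ℕ × ℕ)) :=
  image (fun k => toLex ((g k : ℕ) + 1, (emb hmn u k : ℕ))) univ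

lemma pfun_inj (hmn : m ≤ n) (u : Fin m ↪ Fin n) (g : Fin (n - m) → Fin (r - 1)) :
    Function.Injective (fun k => toLex ((g k : ℕ) + 1, (emb hmn u k : ℕ))) := by
  intro a b hab
  have h2 : (emb hmn u a : ℕ) = (emb hmn u b : ℕ) :=
    congrArg (fun x => (ofLex x).2) hab
  exact (emb hmn u).injective (Fin.ext h2)

lemma card_pset (hmn : m ≤ n) (u : Fin m ↪ Fin n) (g : Fin (n - m) → Fin (r - 1)) :
    (pset hmn u g).card = n - m := by
  rw [pset, card_image_of_injective _ (pfun_inj hmn u g), card_univ, Fintype.card_fin]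

noncomputable def qemb (hmn : m ≤ n) (u : Fin m ↪ Fin n) (g : Fin (n - m) → Fin (r - 1)) :
    Fin (n - m) ↪o Lex (ℕ × ℕ) :=
  (pset hmn u g).orderEmbOfFin (card_pset hmn u g)

noncomputable def pr (hmn : m ≤ n) (u : Fin m ↪ Fin n) (g : Fin (n - m) → Fin (r - 1))
    (i : Fin (n - m)) : ℕ × ℕ := ofLex (qemb hmn u g i)

lemma qemb_spec (hmn : m ≤ n) (u : Fin m ↪ Fin n) (g : Fin (n - m) → Fin (r - 1))
    (i : Fin (n - m)) :
    ∃ k, pr hmn u g i = ((g k : ℕ) + 1, (emb hmn u k : ℕ)) := by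
  have hmem : qemb hmn u g i ∈ pset hmn u g := Finset.orderEmbOfFin_mem _ _ _
  rw [pset, mem_image] at hmem
  obtain ⟨k, _, hk⟩ := hmem
  exact ⟨k, by rw [pr, ← hk]; rfl⟩

lemma pr_snd_lt (hmn : m ≤ n) (u : Fin m ↪ Fin n) (g : Fin (n - m) → Fin (r - 1))
    (i : Fin (n - m)) : (pr hmn u g i).2 < n := by
  obtain ⟨k, hk⟩ := qemb_spec hmn u g i
  rw [hk]; exact (emb hmn u k).isLt

lemma pr_fst_pos (hmn : m ≤ n) (u : Fin m ↪ Fin n) (g : Fin (n - m) → Fin (r - 1))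
    (i : Fin (n - m)) : 1 ≤ (pr hmn u g i).1 := by
  obtain ⟨k, hk⟩ := qemb_spec hmn u g i
  rw [hk]; omega

lemma pr_fst_lt (hmn : m ≤ n) (u : Fin m ↪ Fin n) (g : Fin (n - m) → Fin (r - 1))
    (i : Fin (n - m)) : (pr hmn u g i).1 < r := by
  obtain ⟨k, hk⟩ := qemb_spec hmn u g i
  have := (g k).isLt
  rw [hk]; simp only []; omega

lemma pr_snd_inj (hmn : m ≤ n) (u : Fin m ↪ Fin n) (g : Fin (n - m) → Fin (r - 1))
    {i i' : Fin (n - m)} (h : (pr hmn u g i).2 = (pr hmn u g i').2) : i = i' := by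
  obtain ⟨k, hk⟩ := qemb_spec hmn u g i
  obtain ⟨k', hk'⟩ := qemb_spec hmn u g i'
  rw [hk, hk'] at h
  have hkk : k = k' := (emb hmn u).injective (Fin.ext h)
  apply (qemb hmn u g).injective
  have : pr hmn u g i = pr hmn u g i' := by rw [hk, hk', hkk]
  exact (toLex.injective (congrArg toLex this) : _)

lemma pr_snd_notmem (hmn : m ≤ n) (u : Fin m ↪ Fin n) (g : Fin (n - m) → Fin (r - 1))
    (i : Fin (n - m)) :
    (⟨(pr hmn u g i).2, pr_snd_lt hmn u g i⟩ : Fin n) ∉ image u univ := by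
  obtain ⟨k, hk⟩ := qemb_spec hmn u g i
  have h1 : (⟨(pr hmn u g i).2, pr_snd_lt hmn u g i⟩ : Fin n) = emb hmn u k := by
    apply Fin.ext
    show (pr hmn u g i).2 = _
    rw [hk]
  rw [h1]
  have := emb_mem hmn u k
  rw [Sset, mem_sdiff] at this
  exact this.2

noncomputable def Wfun (hmn : m ≤ n) (u : Fin m ↪ Fin n) (g : Fin (n - m) → Fin (r - 1)) :
    Fin n → Fin n := fun i =>
  if h : (i : ℕ) < m then u ⟨i, h⟩
  else ⟨(pr hmn u g (Fin.rev ⟨(i : ℕ) - m, by have := i.isLt; omega⟩)).2,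
        pr_snd_lt hmn u g _⟩

lemma Wfun_inj (hmn : m ≤ n) (u : Fin m ↪ Fin n) (g : Fin (n - m) → Fin (r - 1)) :
    Function.Injective (Wfun hmn u g) := by
  intro a b hab
  unfold Wfun at hab
  by_cases ha : (a : ℕ) < m <;> by_cases hb : (b : ℕ) < m
  · rw [dif_pos ha, dif_pos hb] at hab
    have h2 : (⟨(a : ℕ), ha⟩ : Fin m) = ⟨(b : ℕ), hb⟩ := u.injective hab
    have h3 : (a : ℕ) = (b : ℕ) := by simpa [Fin.mk.injEq] using h2
    exact Fin.ext h3
  · rw [dif_pos ha, dif_neg hb] at hab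
    exact absurd (hab ▸ mem_image_of_mem u (mem_univ _)) (pr_snd_notmem hmn u g _)
  · rw [dif_neg ha, dif_pos hb] at hab
    exact absurd (hab ▸ mem_image_of_mem u (mem_univ _)) (pr_snd_notmem hmn u g _)
  · rw [dif_neg ha, dif_neg hb] at hab
    have h2 := pr_snd_inj hmn u g (congrArg Fin.val hab)
    have h3 := Fin.rev_injective h2
    have h4 : (a : ℕ) - m = (b : ℕ) - m := congrArg Fin.val h3
    exact Fin.ext (by omega)

noncomputable def Wperm (hmn : m ≤ n) (u : Fin m ↪ Fin n) (g : Fin (n - m) → Fin (r - 1)) :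
    Equiv.Perm (Fin n) :=
  Equiv.ofBijective _ (Finite.injective_iff_bijective.mp (Wfun_inj hmn u g))

lemma Wperm_apply (hmn : m ≤ n) (u : Fin m ↪ Fin n) (g : Fin (n - m) → Fin (r - 1))
    (i : Fin n) : Wperm hmn u g i = Wfun hmn u g i := rfl

noncomputable def Cfun (hmn : m ≤ n) (c₀ : Fin m → ZMod r) (u : Fin m ↪ Fin n)
    (g : Fin (n - m) → Fin (r - 1)) : Fin n → ZMod r := fun i =>
  if h : (i : ℕ) < m then c₀ ⟨i, h⟩
  else (((pr hmn u g (Fin.rev ⟨(i : ℕ) - m, by have := i.isLt; omega⟩)).1 : ℕ) : ZMod r)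

end CPA

namespace CPA
open Finset ColoredPerm

variable {n r m : ℕ}

lemma Gmem [NeZero r] (hmn : m ≤ n) (c₀ : Fin m → ZMod r) (u : Fin m ↪ Fin n)
    (g : Fin (n - m) → Fin (r - 1)) (i : Fin n) (hi : m ≤ (i : ℕ)) :
    IsDescent (Wperm hmn u g, Cfun hmn c₀ u g) i := by
  have hin := i.isLt
  rw [IsDescent]
  by_cases h : (i : ℕ) + 1 < n
  · rw [dif_pos h]
    set j : Fin (n - m) := ⟨(i : ℕ) - m, by omega⟩ with hjdef
    set j' : Fin (n - m) := ⟨(i : ℕ) + 1 - m, by omega⟩ with hj'def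
    have hcol : (Wperm hmn u g, Cfun hmn c₀ u g).2 i
        = (((pr hmn u g j.rev).1 : ℕ) : ZMod r) := by
      show Cfun hmn c₀ u g i = _
      rw [Cfun, dif_neg (by omega : ¬ (i : ℕ) < m)]
    have hcol' : (Wperm hmn u g, Cfun hmn c₀ u g).2 ⟨(i : ℕ) + 1, h⟩
        = (((pr hmn u g j'.rev).1 : ℕ) : ZMod r) := by
      show Cfun hmn c₀ u g _ = _
      rw [Cfun, dif_neg (by simp; omega : ¬ ((⟨(i : ℕ) + 1, h⟩ : Fin n) : ℕ) < m)]
    have hW : (Wperm hmn u g, Cfun hmn c₀ u g).1 i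
        = (⟨(pr hmn u g j.rev).2, pr_snd_lt hmn u g _⟩ : Fin n) := by
      show Wfun hmn u g i = _
      rw [Wfun, dif_neg (by omega : ¬ (i : ℕ) < m)]
    have hW' : (Wperm hmn u g, Cfun hmn c₀ u g).1 ⟨(i : ℕ) + 1, h⟩
        = (⟨(pr hmn u g j'.rev).2, pr_snd_lt hmn u g _⟩ : Fin n) := by
      show Wfun hmn u g _ = _
      rw [Wfun, dif_neg (by simp; omega : ¬ ((⟨(i : ℕ) + 1, h⟩ : Fin n) : ℕ) < m)]
    have hjj' : j < j' := by
      rw [Fin.lt_def]; simp [hjdef, hj'def]; omega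
    have hlt : qemb hmn u g j'.rev < qemb hmn u g j.rev :=
      (qemb hmn u g).strictMono (Fin.rev_lt_rev.mpr hjj')
    have hlex : (pr hmn u g j'.rev).1 < (pr hmn u g j.rev).1 ∨
        (pr hmn u g j'.rev).1 = (pr hmn u g j.rev).1 ∧
          (pr hmn u g j'.rev).2 < (pr hmn u g j.rev).2 :=
      Prod.Lex.lt_iff.mp hlt
    rcases hlex with h1 | ⟨h1, h2⟩
    · left
      rw [hcol, hcol', ZMod.val_cast_of_lt (pr_fst_lt hmn u g _),
        ZMod.val_cast_of_lt (pr_fst_lt hmn u g _)]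
      exact h1
    · right
      constructor
      · rw [hcol, hcol', h1]
      · rw [hW, hW']
        exact Fin.mk_lt_mk.mpr h2
  · rw [dif_neg h]
    have hcol : (Wperm hmn u g, Cfun hmn c₀ u g).2 i
        = (((pr hmn u g (Fin.rev ⟨(i : ℕ) - m, by omega⟩)).1 : ℕ) : ZMod r) := by
      show Cfun hmn c₀ u g i = _
      rw [Cfun, dif_neg (by omega : ¬ (i : ℕ) < m)]
    rw [hcol, ZMod.val_cast_of_lt (pr_fst_lt hmn u g _)]
    have := pr_fst_pos hmn u g (Fin.rev ⟨(i : ℕ) - m, by omega⟩)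
    omega

lemma colors_pos [NeZero r] {σ : CP n r}
    (hσ : ∀ i : Fin n, m ≤ (i : ℕ) → IsDescent σ i) :
    ∀ (t : ℕ) (i : Fin n), m ≤ (i : ℕ) → n = (i : ℕ) + t + 1 → (σ.2 i).val ≠ 0 := by
  intro t
  induction t with
  | zero =>
      intro i hi ht
      have hd := hσ i hi
      rw [IsDescent, dif_neg (by omega)] at hd
      exact hd
  | succ t ih =>
      intro i hi ht
      have h1 : (i : ℕ) + 1 < n := by omega
      have hd := hσ i hi
      rw [IsDescent, dif_pos h1] at hd
      have h2 := ih ⟨(i : ℕ) + 1, h1⟩ (by simp; omega) (by simp; omega)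
      rcases hd with h3 | ⟨h3, _⟩
      · omega
      · rw [h3]; exact h2

lemma colors_pos' [NeZero r] {σ : CP n r}
    (hσ : ∀ i : Fin n, m ≤ (i : ℕ) → IsDescent σ i) (i : Fin n) (hi : m ≤ (i : ℕ)) :
    (σ.2 i).val ≠ 0 :=
  colors_pos hσ (n - (i : ℕ) - 1) i hi (by have := i.isLt; omega)

noncomputable def headc (hmn : m ≤ n) (σ : CP n r) : Fin m → ZMod r :=
  fun j => σ.2 ⟨(j : ℕ), lt_of_lt_of_le j.isLt hmn⟩

noncomputable def headu (hmn : m ≤ n) (σ : CP n r) : Fin m ↪ Fin n :=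
  ⟨fun j => σ.1 ⟨(j : ℕ), lt_of_lt_of_le j.isLt hmn⟩, by
    intro a b hab
    have h2 := σ.1.injective hab
    exact Fin.ext (by simpa [Fin.mk.injEq] using h2)⟩

lemma symm_tail_ge (hmn : m ≤ n) (σ : CP n r) {v : Fin n}
    (hv : v ∈ Sset (headu hmn σ)) : m ≤ (σ.1.symm v : ℕ) := by
  by_contra hc
  push_neg at hc
  apply (mem_sdiff.mp hv).2
  have : headu hmn σ ⟨(σ.1.symm v : ℕ), hc⟩ = v := by
    show σ.1 _ = v
    have h5 : (⟨((⟨((σ.1.symm v : Fin n) : ℕ), hc⟩ : Fin m) : ℕ),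
        lt_of_lt_of_le (Fin.is_lt _) hmn⟩ : Fin n) = σ.1.symm v := Fin.ext rfl
    exact (congrArg σ.1 h5).trans (σ.1.apply_symm_apply v)
  rw [← this]
  exact mem_image_of_mem _ (mem_univ _)

noncomputable def gfun [NeZero r] (hmn : m ≤ n) (σ : CP n r)
    (hσ : ∀ i : Fin n, m ≤ (i : ℕ) → IsDescent σ i) : Fin (n - m) → Fin (r - 1) :=
  fun k => ⟨(σ.2 (σ.1.symm (emb hmn (headu hmn σ) k))).val - 1, by
    have h1 := colors_pos' hσ (σ.1.symm (emb hmn (headu hmn σ) k))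
      (symm_tail_ge hmn σ (emb_mem hmn (headu hmn σ) k))
    have h2 := ZMod.val_lt (σ.2 (σ.1.symm (emb hmn (headu hmn σ) k)))
    omega⟩

/-- the tail position -/
def pos (j : Fin (n - m)) : Fin n := ⟨m + (j : ℕ), by have := j.isLt; omega⟩

noncomputable def tailpair (σ : CP n r) (j : Fin (n - m)) : Lex (ℕ × ℕ) :=
  toLex ((σ.2 (pos j)).val, (σ.1 (pos j) : ℕ))

end CPA

namespace CPA
open Finset ColoredPerm

variable {n r m : ℕ}

lemma tailpair_strictAnti {σ : CP n r}
    (hσ : ∀ i : Fin n, m ≤ (i : ℕ) → IsDescent σ i) :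
    StrictAnti (tailpair (m := m) σ) := by
  apply step_strictAnti
  intro j hj
  have hpos : m + j + 1 < n := by omega
  have hd := hσ (pos ⟨j, Nat.lt_of_succ_lt hj⟩) (by simp [pos])
  rw [IsDescent, dif_pos (show ((pos (⟨j, Nat.lt_of_succ_lt hj⟩ : Fin (n - m))) : ℕ) + 1 < n
    from hpos)] at hd
  rw [tailpair, tailpair, Prod.Lex.lt_iff]
  rcases hd with h1 | ⟨h1, h2⟩
  · left; exact h1
  · right
    refine ⟨(congrArg ZMod.val h1).symm, ?_⟩
    exact h2

lemma tailpair_mem [NeZero r] (hmn : m ≤ n) {σ : CP n r}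
    (hσ : ∀ i : Fin n, m ≤ (i : ℕ) → IsDescent σ i) (j : Fin (n - m)) :
    tailpair σ j ∈ pset hmn (headu hmn σ) (gfun hmn σ hσ) := by
  have hvS : σ.1 (pos j) ∈ Sset (headu hmn σ) := by
    rw [Sset, mem_sdiff]
    refine ⟨mem_univ _, ?_⟩
    intro hmem
    obtain ⟨a, _, ha⟩ := mem_image.mp hmem
    have h2 := σ.1.injective ha
    have hval : (a : ℕ) = m + (j : ℕ) := by
      have h7 := congrArg Fin.val h2
      simpa [pos] using h7
    have := a.isLt; omega
  obtain ⟨k, hk⟩ : ∃ k, emb hmn (headu hmn σ) k = σ.1 (pos j) := by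
    have h6 : (σ.1 (pos j) : Fin n) ∈ Set.range ⇑(emb hmn (headu hmn σ)) := by
      rw [emb, Finset.range_orderEmbOfFin]
      exact hvS
    exact h6
  rw [pset, mem_image]
  refine ⟨k, mem_univ _, ?_⟩
  have hsymm : σ.1.symm (emb hmn (headu hmn σ) k) = pos j := by
    rw [hk]; exact σ.1.symm_apply_apply _
  rw [tailpair]
  congr 1
  refine Prod.ext ?_ ?_
  · show (gfun hmn σ hσ k : ℕ) + 1 = (σ.2 (pos j)).val
    show (σ.2 (σ.1.symm (emb hmn (headu hmn σ) k))).val - 1 + 1 = _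
    rw [hsymm]
    have := colors_pos' hσ (pos j) (by simp [pos])
    omega
  · show (emb hmn (headu hmn σ) k : ℕ) = (σ.1 (pos j) : ℕ)
    rw [hk]

lemma tailpair_eq_qemb [NeZero r] (hmn : m ≤ n) {σ : CP n r}
    (hσ : ∀ i : Fin n, m ≤ (i : ℕ) → IsDescent σ i) (i : Fin (n - m)) :
    qemb hmn (headu hmn σ) (gfun hmn σ hσ) i = tailpair σ i.rev := by
  have hmono : StrictMono (fun i : Fin (n - m) => tailpair σ i.rev) := by
    intro a b hab
    exact tailpair_strictAnti hσ (Fin.rev_lt_rev.mpr hab)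
  have huniq := Finset.orderEmbOfFin_unique (card_pset hmn (headu hmn σ) (gfun hmn σ hσ))
      (fun i => tailpair_mem hmn hσ i.rev) hmono
  exact (congrFun huniq i).symm

lemma RT1 [NeZero r] (hmn : m ≤ n) {σ : CP n r}
    (hσ : ∀ i : Fin n, m ≤ (i : ℕ) → IsDescent σ i) :
    (Wperm hmn (headu hmn σ) (gfun hmn σ hσ),
      Cfun hmn (headc hmn σ) (headu hmn σ) (gfun hmn σ hσ)) = σ := by
  have hpr : ∀ j : Fin (n - m), pr hmn (headu hmn σ) (gfun hmn σ hσ) j.rev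
      = ((σ.2 (pos j)).val, (σ.1 (pos j) : ℕ)) := by
    intro j
    rw [pr, tailpair_eq_qemb hmn hσ, Fin.rev_rev, tailpair]
    rfl
  refine Prod.ext ?_ ?_
  · apply Equiv.ext
    intro i
    show Wfun hmn _ _ i = σ.1 i
    rw [Wfun]
    by_cases h : (i : ℕ) < m
    · rw [dif_pos h]
      exact congrArg σ.1 (Fin.ext rfl)
    · rw [dif_neg h]
      have hjlt : (i : ℕ) - m < n - m := by have := i.isLt; omega
      have hj : pos (⟨(i : ℕ) - m, hjlt⟩ : Fin (n - m)) = i :=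
        Fin.ext (by simp [pos]; omega)
      apply Fin.ext
      show (pr hmn (headu hmn σ) (gfun hmn σ hσ) (Fin.rev ⟨(i : ℕ) - m, hjlt⟩)).2
        = ((σ.1 i : Fin n) : ℕ)
      rw [hpr ⟨(i : ℕ) - m, hjlt⟩, hj]
  · funext i
    show Cfun hmn _ _ _ i = σ.2 i
    rw [Cfun]
    by_cases h : (i : ℕ) < m
    · rw [dif_pos h]
      exact congrArg σ.2 (Fin.ext rfl)
    · rw [dif_neg h]
      have hjlt : (i : ℕ) - m < n - m := by have := i.isLt; omega
      have hj : pos (⟨(i : ℕ) - m, hjlt⟩ : Fin (n - m)) = i :=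
        Fin.ext (by simp [pos]; omega)
      show (((pr hmn (headu hmn σ) (gfun hmn σ hσ) (Fin.rev ⟨(i : ℕ) - m, hjlt⟩)).1 : ℕ)
        : ZMod r) = σ.2 i
      rw [hpr ⟨(i : ℕ) - m, hjlt⟩, hj]
      exact ZMod.natCast_rightInverse _

lemma RT2a [NeZero r] (hmn : m ≤ n) (c₀ : Fin m → ZMod r) (u : Fin m ↪ Fin n)
    (g : Fin (n - m) → Fin (r - 1)) :
    headc hmn (Wperm hmn u g, Cfun hmn c₀ u g) = c₀ := by
  funext j
  show Cfun hmn c₀ u g ⟨(j : ℕ), _⟩ = c₀ j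
  rw [Cfun, dif_pos (show ((⟨(j : ℕ), lt_of_lt_of_le j.isLt hmn⟩ : Fin n) : ℕ) < m from j.isLt)]

lemma RT2b [NeZero r] (hmn : m ≤ n) (c₀ : Fin m → ZMod r) (u : Fin m ↪ Fin n)
    (g : Fin (n - m) → Fin (r - 1)) :
    headu hmn (Wperm hmn u g, Cfun hmn c₀ u g) = u := by
  apply DFunLike.ext
  intro j
  show Wfun hmn u g ⟨(j : ℕ), _⟩ = u j
  rw [Wfun, dif_pos (show ((⟨(j : ℕ), lt_of_lt_of_le j.isLt hmn⟩ : Fin n) : ℕ) < m from j.isLt)]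

lemma RT2c [NeZero r] (hmn : m ≤ n) (c₀ : Fin m → ZMod r) (u : Fin m ↪ Fin n)
    (g : Fin (n - m) → Fin (r - 1))
    (hσd : ∀ i : Fin n, m ≤ (i : ℕ) → IsDescent (Wperm hmn u g, Cfun hmn c₀ u g) i) :
    gfun hmn (Wperm hmn u g, Cfun hmn c₀ u g) hσd = g := by
  have hu : headu hmn (Wperm hmn u g, Cfun hmn c₀ u g) = u := RT2b hmn c₀ u g
  funext k
  apply Fin.ext
  show (((Wperm hmn u g, Cfun hmn c₀ u g).2
      ((Wperm hmn u g).symm (emb hmn (headu hmn (Wperm hmn u g, Cfun hmn c₀ u g)) k))).val) - 1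
    = (g k : ℕ)
  rw [hu]
  -- find the a with qemb a = the pair of k
  have hmem : toLex ((g k : ℕ) + 1, (emb hmn u k : ℕ)) ∈ pset hmn u g := by
    rw [pset, mem_image]; exact ⟨k, mem_univ _, rfl⟩
  obtain ⟨a, ha⟩ : ∃ a, qemb hmn u g a = toLex ((g k : ℕ) + 1, (emb hmn u k : ℕ)) := by
    have h6 : toLex ((g k : ℕ) + 1, (emb hmn u k : ℕ)) ∈ Set.range ⇑(qemb hmn u g) := by
      rw [qemb, Finset.range_orderEmbOfFin]
      exact hmem
    exact h6
  have hpra : pr hmn u g a = ((g k : ℕ) + 1, (emb hmn u k : ℕ)) := by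
    rw [pr, ha]; rfl
  set i0 : Fin n := pos a.rev with hi0
  have hi0m : ¬ ((i0 : Fin n) : ℕ) < m := by simp [hi0, pos]
  have hidx : (⟨((i0 : Fin n) : ℕ) - m, by have := i0.isLt; omega⟩ : Fin (n - m)) = a.rev :=
    Fin.ext (by simp [hi0, pos])
  have hWi0 : Wperm hmn u g i0 = emb hmn u k := by
    show Wfun hmn u g i0 = _
    rw [Wfun, dif_neg hi0m]
    apply Fin.ext
    show (pr hmn u g (Fin.rev ⟨((i0 : Fin n) : ℕ) - m, by have := i0.isLt; omega⟩)).2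
      = ((emb hmn u k : Fin n) : ℕ)
    rw [hidx, Fin.rev_rev, hpra]
  have hsymm : (Wperm hmn u g).symm (emb hmn u k) = i0 :=
    (Equiv.symm_apply_eq _).mpr hWi0.symm
  rw [hsymm]
  show (Cfun hmn c₀ u g i0).val - 1 = (g k : ℕ)
  rw [Cfun, dif_neg hi0m]
  have hC : (pr hmn u g (Fin.rev ⟨((i0 : Fin n) : ℕ) - m,
      by have := i0.isLt; omega⟩)).1 = (g k : ℕ) + 1 := by
    rw [hidx, Fin.rev_rev, hpra]
  have hgk1 : (g k : ℕ) + 1 < r := by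
    have h8 := (g k).isLt
    have h9 := Nat.pos_of_ne_zero (NeZero.ne r)
    omega
  rw [hC, ZMod.val_cast_of_lt hgk1]
  omega

end CPA

namespace CPA
open Finset ColoredPerm

variable {n r m : ℕ}

lemma card_filter [NeZero r] (hmn : m ≤ n) :
    (Finset.univ.filter (fun σ : CP n r => ∀ i : Fin n, m ≤ (i : ℕ) → IsDescent σ i)).card
      = r ^ m * n.descFactorial m * (r - 1) ^ (n - m) := by
  classical
  have h := Finset.card_bij'
    (s := Finset.univ.filter (fun σ : CP n r => ∀ i : Fin n, m ≤ (i : ℕ) → IsDescent σ i))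
    (t := (Finset.univ :
      Finset ((Fin m → ZMod r) × (Fin m ↪ Fin n) × (Fin (n - m) → Fin (r - 1)))))
    (fun σ hσ => (headc hmn σ, headu hmn σ, gfun hmn σ (mem_filter.mp hσ).2))
    (fun d _ => (Wperm hmn d.2.1 d.2.2, Cfun hmn d.1 d.2.1 d.2.2))
    (fun _ _ => mem_univ _)
    (fun d _ => mem_filter.mpr ⟨mem_univ _, fun i hi => Gmem hmn d.1 d.2.1 d.2.2 i hi⟩)
    (fun σ hσ => RT1 hmn (mem_filter.mp hσ).2)
    (fun d hd => by
      obtain ⟨c₀, u, g⟩ := d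
      refine Prod.ext ?_ (Prod.ext ?_ ?_)
      · exact RT2a hmn c₀ u g
      · exact RT2b hmn c₀ u g
      · exact RT2c hmn c₀ u g (fun i hi => Gmem hmn c₀ u g i hi))
  rw [h, card_univ, Fintype.card_prod, Fintype.card_prod, Fintype.card_fun,
    Fintype.card_fun, Fintype.card_embedding_eq, ZMod.card, Fintype.card_fin,
    Fintype.card_fin, Fintype.card_fin]
  simp only [Fintype.card_fin]
  ring

end CPA

open ColoredPerm in
theorem prob_descents_tail (n r m : ℕ) [NeZero r] (hm : 1 ≤ m) (hmn : m < n) :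
    E Finset.univ (fun σ : CP n r =>
        if ∀ i : Fin n, m ≤ (i : ℕ) → IsDescent σ i then 1 else 0) =
      (((r : ℚ) - 1) / r) ^ (n - m) * (1 / Nat.factorial (n - m)) := by
  classical
  rw [ColoredPerm.E]
  rw [Finset.sum_boole]
  rw [CPA.card_filter (le_of_lt hmn)]
  rw [Finset.card_univ, Fintype.card_prod, Fintype.card_perm, Fintype.card_fun, ZMod.card,
    Fintype.card_fin]
  have hrpos : 0 < r := Nat.pos_of_ne_zero (NeZero.ne r)
  have hr1 : ((r - 1 : ℕ) : ℚ) = (r : ℚ) - 1 := by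
    rw [Nat.cast_sub hrpos]; simp
  have hfac' : (n.factorial : ℚ) = (n - m).factorial * n.descFactorial m := by
    exact_mod_cast (Nat.factorial_mul_descFactorial (le_of_lt hmn)).symm
  have hpow : (r : ℚ) ^ n = r ^ m * r ^ (n - m) := by
    rw [← pow_add]; congr 1; omega
  have hrq : (r : ℚ) ≠ 0 := Nat.cast_ne_zero.mpr (NeZero.ne r)
  have hf1 : (((n - m).factorial : ℕ) : ℚ) ≠ 0 :=
    Nat.cast_ne_zero.mpr (Nat.factorial_ne_zero _)
  have hf2 : ((n.descFactorial m : ℕ) : ℚ) ≠ 0 :=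
    Nat.cast_ne_zero.mpr (by rw [Ne, Nat.descFactorial_eq_zero_iff_lt]; omega)
  push_cast
  rw [hr1, hfac', hpow]
  rw [div_pow]
  field_simp
end

section
/- For a uniformly random (ω,τ) ∈ 𝔖_{n,r}, having descents at all of positions m+1,…,n is equivalent to: τ(i) ≠ 0 for all i > m, and ω has descents at positions m+1,…,n-1 in the colored order. In particular P[descents at m+1,…,n] = P[τ(i) ≠ 0 for all i > m] · P[descents at m+1,…,n-1 | τ(i) ≠ 0 for all i > m]. -/
open scoped Classical BigOperators

namespace ColoredPerm

lemma colors_ne_of_descents {n r m : ℕ} (σ : CP n r)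
    (h : ∀ i : Fin n, m ≤ (i : ℕ) → IsDescent σ i) :
    ∀ k, ∀ i : Fin n, m ≤ (i : ℕ) → n - 1 - (i : ℕ) = k → (σ.2 i).val ≠ 0 := by
  intro k
  induction k with
  | zero =>
    intro i hi hk
    have hlast : ¬ ((i : ℕ) + 1 < n) := by omega
    have hd := h i hi
    rw [IsDescent, dif_neg hlast] at hd
    exact hd
  | succ k ih =>
    intro i hi hk
    have hlt : (i : ℕ) + 1 < n := by omega
    have hd := h i hi
    rw [IsDescent, dif_pos hlt] at hd
    rcases hd with hd | ⟨heq, _⟩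
    · omega
    · have := ih ⟨(i : ℕ) + 1, hlt⟩ (by simp; omega) (by simp; omega)
      rw [heq]
      exact this

lemma descent_iff_aux {n r m : ℕ} (hmn : m < n) (σ : CP n r) :
    (∀ i : Fin n, m ≤ (i : ℕ) → IsDescent σ i) ↔
      ((∀ i : Fin n, m ≤ (i : ℕ) → (σ.2 i).val ≠ 0) ∧
        (∀ i : Fin n, m ≤ (i : ℕ) → (i : ℕ) + 1 < n → IsDescent σ i)) := by
  constructor
  · intro h
    exact ⟨fun i hi => colors_ne_of_descents σ h _ i hi rfl, fun i hi _ => h i hi⟩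
  · rintro ⟨hc, hd⟩ i hi
    by_cases hlt : (i : ℕ) + 1 < n
    · exact hd i hi hlt
    · rw [IsDescent, dif_neg hlt]
      exact hc i hi

end ColoredPerm

open ColoredPerm in
theorem descents_tail_decomposition (n r m : ℕ) [NeZero r] (hmn : m < n) :
    (∀ σ : CP n r,
      (∀ i : Fin n, m ≤ (i : ℕ) → IsDescent σ i) ↔
        ((∀ i : Fin n, m ≤ (i : ℕ) → (σ.2 i).val ≠ 0) ∧
          (∀ i : Fin n, m ≤ (i : ℕ) → (i : ℕ) + 1 < n → IsDescent σ i))) ∧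
    ((Finset.univ.filter
          (fun σ : CP n r => ∀ i : Fin n, m ≤ (i : ℕ) → IsDescent σ i)).card : ℚ) /
        ((Finset.univ : Finset (CP n r)).card : ℚ) =
      (((Finset.univ.filter
            (fun σ : CP n r => ∀ i : Fin n, m ≤ (i : ℕ) → (σ.2 i).val ≠ 0)).card : ℚ) /
          ((Finset.univ : Finset (CP n r)).card : ℚ)) *
        (((Finset.univ.filter (fun σ : CP n r =>
              (∀ i : Fin n, m ≤ (i : ℕ) → (i : ℕ) + 1 < n → IsDescent σ i) ∧
              (∀ i : Fin n, m ≤ (i : ℕ) → (σ.2 i).val ≠ 0))).card : ℚ) /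
          ((Finset.univ.filter
              (fun σ : CP n r => ∀ i : Fin n, m ≤ (i : ℕ) → (σ.2 i).val ≠ 0)).card : ℚ)) := by
  refine ⟨fun σ => descent_iff_aux hmn σ, ?_⟩
  set A := Finset.univ.filter
      (fun σ : CP n r => ∀ i : Fin n, m ≤ (i : ℕ) → IsDescent σ i) with hA
  set B := Finset.univ.filter
      (fun σ : CP n r => ∀ i : Fin n, m ≤ (i : ℕ) → (σ.2 i).val ≠ 0) with hB
  set A' := Finset.univ.filter (fun σ : CP n r =>
      (∀ i : Fin n, m ≤ (i : ℕ) → (i : ℕ) + 1 < n → IsDescent σ i) ∧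
      (∀ i : Fin n, m ≤ (i : ℕ) → (σ.2 i).val ≠ 0)) with hA'
  have hAA' : A = A' := by
    apply Finset.filter_congr
    intro σ _
    rw [descent_iff_aux hmn σ]
    simp [and_comm]
  rcases eq_or_lt_of_le (Nat.one_le_iff_ne_zero.2 (NeZero.ne r)) with hr | hr
  · -- r = 1 : all colors are 0, both sides are 0
    have hBempty : B = ∅ := by
      apply Finset.eq_empty_of_forall_notMem
      intro σ hσ
      rw [hB, Finset.mem_filter] at hσ
      have := hσ.2 ⟨m, hmn⟩ (by simp)
      apply this
      have : (σ.2 ⟨m, hmn⟩).val < r := ZMod.val_lt _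
      omega
    have hA'empty : A' = ∅ := by
      apply Finset.eq_empty_of_forall_notMem
      intro σ hσ
      rw [hA', Finset.mem_filter] at hσ
      have : σ ∈ B := by
        rw [hB, Finset.mem_filter]; exact ⟨Finset.mem_univ _, hσ.2.2⟩
      rw [hBempty] at this; exact absurd this (Finset.notMem_empty _)
    rw [hAA', hA'empty, hBempty]
    simp
  · -- r ≥ 2
    have hBne : B.Nonempty := by
      refine ⟨(1, fun _ => 1), ?_⟩
      rw [hB, Finset.mem_filter]
      refine ⟨Finset.mem_univ _, fun i _ => ?_⟩
      haveI : Fact (1 < r) := ⟨hr⟩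
      simp [ZMod.val_one]
    have hBpos : (0 : ℚ) < B.card := by
      exact_mod_cast Finset.card_pos.2 hBne
    have hTpos : (0 : ℚ) < ((Finset.univ : Finset (CP n r)).card : ℚ) := by
      exact_mod_cast Finset.card_pos.2 (Finset.univ_nonempty)
    rw [hAA']
    field_simp
end
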